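/- arXiv:0802.0776 — 5 statements merged into one kernel-verified Lean document; each statement's English description precedes it below -/
import Mathlib

section
/- Let A and B be n×n positive semidefinite Hermitian matrices with eigenvalues α₁ ≥ ... ≥ αₙ and β₁ ≥ ... ≥ βₙ respectively. Then log det(I + A·B) ≤ Σᵢ log(1 + αᵢ·βᵢ). -/
open Matrix ComplexOrder Finset

section CB
variable {R : Type*} [CommRing R] {k n : ℕ}

lemma det_mul_expand (A : Matrix (Fin k) (Fin n) R) (B : Matrix (Fin n) (Fin k) R) :
    (A * B).det = ∑ f : Fin k → Fin n, (A.submatrix id f).det * ∏ i, B (f i) i := by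
  rw [det_apply']
  have h1 : ∀ σ : Equiv.Perm (Fin k),
      (∏ i, (A * B) (σ i) i) = ∑ f : Fin k → Fin n, ∏ i, (A (σ i) (f i) * B (f i) i) := by
    intro σ
    simp_rw [Matrix.mul_apply]
    rw [Finset.prod_univ_sum, Fintype.piFinset_univ]
  simp_rw [h1, Finset.mul_sum]
  rw [Finset.sum_comm]
  congr 1
  ext f
  rw [det_apply', Finset.sum_mul]
  congr 1
  ext σ
  rw [Finset.prod_mul_distrib, mul_assoc]
  simp [Matrix.submatrix_apply]

lemma image_orderEmbOfFin_univ (S : Finset (Fin n)) (h : S.card = k) :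
    Finset.image (S.orderEmbOfFin h) Finset.univ = S := by
  ext x
  simp only [Finset.mem_image, Finset.mem_univ, true_and]
  constructor
  · rintro ⟨i, rfl⟩; exact S.orderEmbOfFin_mem h i
  · intro hx
    have : x ∈ Set.range (S.orderEmbOfFin h) := by
      rw [S.range_orderEmbOfFin h]; exact hx
    exact this

noncomputable def subPermEquiv (hkn : True) :
    ({S : Finset (Fin n) // S.card = k} × Equiv.Perm (Fin k)) ≃
      {f : Fin k → Fin n // Function.Injective f} :=
  Equiv.ofBijective
    (fun p => ⟨p.1.1.orderEmbOfFin p.1.2 ∘ p.2,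
      (p.1.1.orderEmbOfFin p.1.2).injective.comp p.2.injective⟩)
    (by
      constructor
      · rintro ⟨⟨S, hS⟩, σ⟩ ⟨⟨T, hT⟩, τ⟩ h
        have h' : (S.orderEmbOfFin hS) ∘ σ = (T.orderEmbOfFin hT) ∘ τ :=
          congrArg Subtype.val h
        have hST : S = T := by
          have h1 : Finset.image ((S.orderEmbOfFin hS) ∘ σ) Finset.univ = S := by
            rw [← Finset.image_image, Finset.image_univ_equiv]
            exact Finset.image_orderEmbOfFin_univ S hS
          have h2 : Finset.image ((T.orderEmbOfFin hT) ∘ τ) Finset.univ = T := by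
            rw [← Finset.image_image, Finset.image_univ_equiv]
            exact Finset.image_orderEmbOfFin_univ T hT
          rw [← h1, ← h2, h']
        subst hST
        have hστ : σ = τ := by
          apply Equiv.ext
          intro i
          have := congrFun h' i
          simp only [Function.comp_apply] at this
          exact (S.orderEmbOfFin hS).injective this
        simp [hστ]
      · rintro ⟨f, hf⟩
        set S : Finset (Fin n) := Finset.image f Finset.univ with hSdef
        have hS : S.card = k := by
          rw [hSdef, Finset.card_image_of_injective _ hf, Finset.card_univ, Fintype.card_fin]
        have hmem : ∀ i, f i ∈ S := fun i => Finset.mem_image_of_mem f (Finset.mem_univ i)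
        set g : Fin k → Fin k := fun i => (S.orderIsoOfFin hS).symm ⟨f i, hmem i⟩ with hgdef
        have hginj : Function.Injective g := by
          intro i j hij
          apply hf
          have := congrArg (fun z => ((S.orderIsoOfFin hS) z : Fin n)) hij
          simpa [hgdef] using this
        obtain ⟨σ, hσ⟩ : ∃ σ : Equiv.Perm (Fin k), ∀ i, σ i = g i :=
          ⟨Equiv.ofBijective g (Finite.injective_iff_bijective.mp hginj), fun _ => rfl⟩
        refine ⟨⟨⟨S, hS⟩, σ⟩, ?_⟩
        ext i : 2
        show S.orderEmbOfFin hS (σ i) = f i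
        rw [hσ]
        have : ((S.orderIsoOfFin hS) (g i) : Fin n) = S.orderEmbOfFin hS (g i) := rfl
        rw [← this, hgdef]
        simp)

theorem cauchyBinet (A : Matrix (Fin k) (Fin n) R) (B : Matrix (Fin n) (Fin k) R) :
    (A * B).det = ∑ S : {S : Finset (Fin n) // S.card = k},
      (A.submatrix id (S.1.orderEmbOfFin S.2)).det * (B.submatrix (S.1.orderEmbOfFin S.2) id).det := by
  rw [det_mul_expand]
  have hzero : ∀ f : Fin k → Fin n, ¬ Function.Injective f →
      (A.submatrix id f).det * ∏ i, B (f i) i = 0 := by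
    intro f hf
    rw [Function.not_injective_iff] at hf
    obtain ⟨i, j, hij, hne⟩ := hf
    rw [Matrix.det_zero_of_column_eq hne (fun x => by simp [Matrix.submatrix_apply, hij]), zero_mul]
  have hstep : (∑ f : Fin k → Fin n, (A.submatrix id f).det * ∏ i, B (f i) i)
      = ∑ f : {f : Fin k → Fin n // Function.Injective f},
          (A.submatrix id f.1).det * ∏ i, B (f.1 i) i := by
    rw [← Finset.sum_subtype (Finset.univ.filter (fun f : Fin k → Fin n => Function.Injective f))
      (by simp) (fun f => (A.submatrix id f).det * ∏ i, B (f i) i)]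
    symm
    apply Finset.sum_filter_of_ne
    intro f _ h
    by_contra hinj
    exact h (hzero f hinj)
  rw [hstep, ← Equiv.sum_comp (subPermEquiv trivial)
    (fun f => (A.submatrix id f.1).det * ∏ i, B (f.1 i) i)]
  rw [Fintype.sum_prod_type]
  congr 1
  ext S
  rw [det_apply' (B.submatrix _ id), Finset.mul_sum]
  congr 1
  ext σ
  show (A.submatrix id ((S.1.orderEmbOfFin S.2) ∘ σ)).det * (∏ i, B ((S.1.orderEmbOfFin S.2) (σ i)) i)
      = _
  have : A.submatrix id ((S.1.orderEmbOfFin S.2) ∘ σ)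
      = (A.submatrix id (S.1.orderEmbOfFin S.2)).submatrix id σ := by
    ext i j; simp [Matrix.submatrix_apply]
  rw [this, Matrix.det_permute']
  simp [Matrix.submatrix_apply]
  ring
end CB

section Helpers
variable {n k : ℕ}
open Finset

/-- decreasing rearrangement of a tuple -/
noncomputable def decSort (f : Fin n → ℝ) : Fin n → ℝ :=
  f ∘ (Fin.revPerm.trans (Tuple.sort f))

lemma decSort_antitone (f : Fin n → ℝ) : Antitone (decSort f) := by
  intro i j hij
  have hmono := Tuple.monotone_sort f
  have : Fin.rev j ≤ Fin.rev i := Fin.rev_le_rev.mpr hij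
  exact hmono this

lemma decSort_perm (f : Fin n → ℝ) : ∀ i, decSort f i = f ((Fin.revPerm.trans (Tuple.sort f)) i) :=
  fun _ => rfl

/-- uniqueness: any antitone tuple that is a permutation of `f` equals `decSort f` -/
lemma antitone_eq_decSort (f : Fin n → ℝ) (α : Fin n → ℝ) (hanti : Antitone α)
    (σ : Equiv.Perm (Fin n)) (h : ∀ i, α i = f (σ i)) : α = decSort f := by
  have hmono1 : Monotone (f ∘ (Fin.revPerm.trans σ)) := by
    intro i j hij
    have h1 : Fin.rev j ≤ Fin.rev i := Fin.rev_le_rev.mpr hij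
    have := hanti h1
    simpa [Equiv.trans_apply, Fin.revPerm_apply, ← h] using this
  have hmono2 : Monotone (f ∘ (Tuple.sort f)) := Tuple.monotone_sort f
  have huniq := Tuple.unique_monotone hmono1 hmono2
  funext i
  have := congrFun huniq (Fin.rev i)
  simp only [Function.comp_apply, Equiv.trans_apply, Fin.revPerm_apply, Fin.rev_rev] at this
  rw [h i, this]
  simp [decSort, Equiv.trans_apply]

lemma strictMono_le_apply' {f : Fin k → Fin n} (hf : StrictMono f) :
    ∀ (m : ℕ) (hm : m < k), m ≤ (f ⟨m, hm⟩ : ℕ) := by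
  intro m
  induction m with
  | zero => intro hm; exact Nat.zero_le _
  | succ i ih =>
    intro hm
    have hi : i < k := Nat.lt_of_succ_lt hm
    have h1 : f ⟨i, hi⟩ < f ⟨i + 1, hm⟩ := hf (by simp [Fin.lt_def])
    have h2 := ih hi
    have h3 := Fin.lt_def.mp h1
    omega

lemma strictMono_le_apply {f : Fin k → Fin n} (hf : StrictMono f) (j : Fin k) :
    (j : ℕ) ≤ (f j : ℕ) := by
  have := strictMono_le_apply' hf j.1 j.2
  simpa using this

lemma prod_subset_le_prefix (x : Fin n → ℝ) (hx : Antitone x) (hx0 : ∀ i, 0 ≤ x i)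
    (S : Finset (Fin n)) (hS : S.card = k) (hkn : k ≤ n) :
    ∏ i ∈ S, x i ≤ ∏ j : Fin k, x (Fin.castLE hkn j) := by
  have h1 := Finset.prod_image (s := Finset.univ) (g := ⇑(S.orderEmbOfFin hS)) (f := x)
    (fun a _ b _ hab => (S.orderEmbOfFin hS).injective hab)
  rw [Finset.image_orderEmbOfFin_univ S hS] at h1
  rw [h1]
  apply Finset.prod_le_prod
  · intro j _; exact hx0 _
  · intro j _
    apply hx
    have h2 := strictMono_le_apply (S.orderEmbOfFin hS).strictMono j
    rw [Fin.le_def]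
    simpa using h2

/-- general: subset product of `d` bounded by prefix product of its decreasing rearrangement -/
lemma prod_subset_le_prefix' (d : Fin n → ℝ) (hd0 : ∀ i, 0 ≤ d i)
    (S : Finset (Fin n)) (hS : S.card = k) (hkn : k ≤ n) :
    ∏ i ∈ S, d i ≤ ∏ j : Fin k, decSort d (Fin.castLE hkn j) := by
  set τ := (Fin.revPerm.trans (Tuple.sort d)) with hτ
  have hd : ∀ i, d i = decSort d (τ.symm i) := by
    intro i; rw [decSort_perm, Equiv.apply_symm_apply]
  have h1 : ∏ i ∈ S, d i = ∏ i ∈ S.image τ.symm, decSort d i := by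
    rw [Finset.prod_image (fun a _ b _ hab => τ.symm.injective hab)]
    exact Finset.prod_congr rfl (fun i _ => hd i)
  rw [h1]
  exact prod_subset_le_prefix (decSort d) (decSort_antitone d)
    (fun i => by rw [decSort_perm]; exact hd0 _)
    _ (by rw [Finset.card_image_of_injective _ τ.symm.injective, hS]) hkn

lemma conjTranspose_submatrix_col (M : Matrix (Fin n) (Fin k) ℂ) (e : Fin k → Fin n) :
    Mᴴ.submatrix id e = (M.submatrix e id)ᴴ := by
  ext i j; simp [Matrix.conjTranspose_apply, Matrix.submatrix_apply]

lemma cb_gram (M : Matrix (Fin n) (Fin k) ℂ) :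
    (Mᴴ * M).det.re = ∑ S : {S : Finset (Fin n) // S.card = k},
      Complex.normSq ((M.submatrix (S.1.orderEmbOfFin S.2) id).det) := by
  rw [cauchyBinet]
  rw [Complex.re_sum]
  congr 1; ext S
  rw [conjTranspose_submatrix_col, Matrix.det_conjTranspose, Complex.star_def,
    ← Complex.normSq_eq_conj_mul_self, Complex.ofReal_re]

lemma cb_gram_diag (M : Matrix (Fin n) (Fin k) ℂ) (d : Fin n → ℝ) :
    (Mᴴ * Matrix.diagonal (fun i => (d i : ℂ)) * M).det.re
      = ∑ S : {S : Finset (Fin n) // S.card = k},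
        (∏ i ∈ S.1, d i) * Complex.normSq ((M.submatrix (S.1.orderEmbOfFin S.2) id).det) := by
  rw [Matrix.mul_assoc, ← Matrix.mul_assoc, cauchyBinet, Complex.re_sum]
  congr 1; ext S
  set e := S.1.orderEmbOfFin S.2
  have h1 : (Mᴴ * Matrix.diagonal (fun i => (d i : ℂ))).submatrix id e
      = Mᴴ.submatrix id e * Matrix.diagonal (fun j => (d (e j) : ℂ)) := by
    ext i j
    simp [Matrix.mul_diagonal, Matrix.submatrix_apply, Matrix.mul_apply, Matrix.diagonal_apply,
      Finset.sum_ite_eq, Finset.mul_sum]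
  rw [h1, Matrix.det_mul, Matrix.det_diagonal, conjTranspose_submatrix_col,
    Matrix.det_conjTranspose]
  have h2 : ∏ i ∈ S.1, d i = ∏ j : Fin k, d (e j) := by
    rw [← Finset.image_orderEmbOfFin_univ S.1 S.2, Finset.prod_image]
    intro x _ y _ h
    exact (S.1.orderEmbOfFin S.2).injective h
  have h3 : (star (M.submatrix (⇑e) id).det * ∏ i : Fin k, ((d (e i) : ℂ)))
      * (M.submatrix (⇑e) id).det
      = (((∏ j : Fin k, d (e j)) * Complex.normSq ((M.submatrix (⇑e) id).det) : ℝ) : ℂ) := by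
    have : star (M.submatrix (⇑e) id).det * (M.submatrix (⇑e) id).det
        = ((Complex.normSq ((M.submatrix (⇑e) id).det) : ℝ) : ℂ) := by
      rw [Complex.star_def, ← Complex.normSq_eq_conj_mul_self]
    push_cast [← this]
    ring
  rw [h3, Complex.ofReal_re, h2]

lemma key_ineq (M : Matrix (Fin n) (Fin k) ℂ) (d : Fin n → ℝ) (c : ℝ)
    (hbound : ∀ S : Finset (Fin n), S.card = k → ∏ i ∈ S, d i ≤ c) :
    (Mᴴ * Matrix.diagonal (fun i => (d i : ℂ)) * M).det.re ≤ c * (Mᴴ * M).det.re := by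
  rw [cb_gram_diag, cb_gram, Finset.mul_sum]
  apply Finset.sum_le_sum
  intro S _
  exact mul_le_mul_of_nonneg_right (hbound S.1 S.2) (Complex.normSq_nonneg _)

lemma pointwise_log_ineq {x y : ℝ} (hx : 0 < x) (hy : 0 < y) :
    Real.log (1 + x) - Real.log (1 + y) ≤ (x / (1 + x)) * (Real.log x - Real.log y) := by
  have h1x : (0:ℝ) < 1 + x := by linarith
  have h1y : (0:ℝ) < 1 + y := by linarith
  have hw1 : (0:ℝ) ≤ 1 / (1 + x) := by positivity
  have hw2 : (0:ℝ) ≤ x / (1 + x) := by positivity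
  have hp2 : (0:ℝ) ≤ y / x := by positivity
  have hsum : 1 / (1 + x) + x / (1 + x) = 1 := by field_simp
  have hAM := Real.geom_mean_le_arith_mean2_weighted hw1 hw2 zero_le_one hp2 hsum
  have hAM' : (y / x) ^ (x / (1 + x)) ≤ (1 + y) / (1 + x) := by
    calc (y / x) ^ (x / (1 + x)) = 1 ^ (1 / (1 + x)) * (y / x) ^ (x / (1 + x)) := by
          rw [Real.one_rpow, one_mul]
      _ ≤ 1 / (1 + x) * 1 + x / (1 + x) * (y / x) := hAM
      _ = (1 + y) / (1 + x) := by field_simp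
  have hyx : (0:ℝ) < y / x := by positivity
  have hlog := Real.log_le_log (by positivity) hAM'
  rw [Real.log_rpow hyx, Real.log_div (ne_of_gt h1y) (ne_of_gt h1x),
    Real.log_div (ne_of_gt hy) (ne_of_gt hx)] at hlog
  nlinarith [hlog]

lemma abel_nonpos (g d : ℕ → ℝ) (M : ℕ) (hg0 : ∀ i, 0 ≤ g i)
    (hgd : ∀ i, g (i + 1) ≤ g i) (hD : ∀ k, k ≤ M → ∑ i ∈ Finset.range k, d i ≤ 0) :
    ∑ i ∈ Finset.range M, g i * d i ≤ 0 := by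
  have key : ∀ m, m ≤ M → ∑ i ∈ Finset.range m, g i * d i ≤ g m * ∑ i ∈ Finset.range m, d i := by
    intro m
    induction m with
    | zero => intro _; simp
    | succ p ih =>
      intro hp
      have hP := ih (Nat.le_of_succ_le hp)
      rw [Finset.sum_range_succ, Finset.sum_range_succ]
      have h1 : ∑ i ∈ Finset.range p, g i * d i + g p * d p
          ≤ g p * (∑ i ∈ Finset.range p, d i) + g p * d p := by linarith
      have h2 : g p * (∑ i ∈ Finset.range p, d i) + g p * d p
          = g p * (∑ i ∈ Finset.range p, d i + d p) := by ring
      have h3 : g p * (∑ i ∈ Finset.range p, d i + d p)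
          ≤ g (p + 1) * (∑ i ∈ Finset.range p, d i + d p) := by
        have hDp : ∑ i ∈ Finset.range p, d i + d p ≤ 0 := by
          have := hD (p + 1) hp
          rwa [Finset.sum_range_succ] at this
        exact mul_le_mul_of_nonpos_right (hgd p) hDp |>.trans_eq rfl
      linarith
  have := key M le_rfl
  have hDM := hD M le_rfl
  have := mul_nonpos_of_nonneg_of_nonpos (hg0 M) hDM
  linarith

lemma weak_log_maj_nat (n : ℕ) (X Y : ℕ → ℝ) (hXa : Antitone X) (hX0 : ∀ i, 0 ≤ X i)
    (hY0 : ∀ i, 0 ≤ Y i) (hXtail : ∀ i, n ≤ i → X i = 0)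
    (h : ∀ k, k ≤ n → ∏ i ∈ range k, X i ≤ ∏ i ∈ range k, Y i) :
    ∑ i ∈ range n, Real.log (1 + X i) ≤ ∑ i ∈ range n, Real.log (1 + Y i) := by
  classical
  have hex : ∃ j, X j ≤ 0 := ⟨n, le_of_eq (hXtail n le_rfl)⟩
  set m := Nat.find hex with hm
  have hmn : m ≤ n := Nat.find_le (le_of_eq (hXtail n le_rfl))
  have hpos : ∀ i, i < m → 0 < X i := by
    intro i hi
    have := Nat.find_min hex hi
    push_neg at this
    exact this
  have hzero : ∀ i, m ≤ i → X i = 0 := by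
    intro i hi
    have h1 : X i ≤ X m := hXa hi
    have h2 : X m ≤ 0 := Nat.find_spec hex
    exact le_antisymm (h1.trans h2) (hX0 i)
  have hYpos : ∀ i, i < m → 0 < Y i := by
    intro i hi
    by_contra hY
    push_neg at hY
    have hY0' : Y i = 0 := le_antisymm hY (hY0 i)
    have h1 : ∏ j ∈ range (i + 1), Y j = 0 :=
      Finset.prod_eq_zero (Finset.self_mem_range_succ i) hY0'
    have h2 : 0 < ∏ j ∈ range (i + 1), X j :=
      Finset.prod_pos (fun j hj => hpos j (lt_of_lt_of_le (Finset.mem_range.mp hj) hi))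
    have h3 := h (i + 1) (le_trans hi hmn)
    rw [h1] at h3
    linarith
  -- reduce to range m
  have hsplitX : ∑ i ∈ range n, Real.log (1 + X i) = ∑ i ∈ range m, Real.log (1 + X i) := by
    rw [← Finset.sum_range_add_sum_Ico _ hmn]
    have : ∑ i ∈ Finset.Ico m n, Real.log (1 + X i) = 0 := by
      apply Finset.sum_eq_zero
      intro i hi
      rw [hzero i (Finset.mem_Ico.mp hi).1]
      simp
    rw [this, add_zero]
  have hsplitY : ∑ i ∈ range m, Real.log (1 + Y i) ≤ ∑ i ∈ range n, Real.log (1 + Y i) := by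
    rw [← Finset.sum_range_add_sum_Ico _ hmn]
    have : 0 ≤ ∑ i ∈ Finset.Ico m n, Real.log (1 + Y i) := by
      apply Finset.sum_nonneg
      intro i _
      apply Real.log_nonneg
      linarith [hY0 i]
    linarith
  rw [hsplitX]
  refine le_trans ?_ hsplitY
  -- core inequality on range m
  have core : ∑ i ∈ range m, (Real.log (1 + X i) - Real.log (1 + Y i)) ≤ 0 := by
    set g : ℕ → ℝ := fun i => X i / (1 + X i) with hg
    set d : ℕ → ℝ := fun i => Real.log (X i) - Real.log (Y i) with hd
    have step1 : ∑ i ∈ range m, (Real.log (1 + X i) - Real.log (1 + Y i))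
        ≤ ∑ i ∈ range m, g i * d i := by
      apply Finset.sum_le_sum
      intro i hi
      exact pointwise_log_ineq (hpos i (Finset.mem_range.mp hi)) (hYpos i (Finset.mem_range.mp hi))
    refine step1.trans (abel_nonpos g d m (fun i => div_nonneg (hX0 i) (by linarith [hX0 i])) ?_ ?_)
    · intro i
      have h1 : X (i + 1) ≤ X i := hXa (Nat.le_succ i)
      have h2 : 0 ≤ X (i + 1) := hX0 _
      rw [hg]
      rw [div_le_div_iff₀ (by linarith) (by linarith [hX0 i])]
      nlinarith
    · intro k hk
      have hdlog : ∑ i ∈ range k, d i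
          = Real.log (∏ i ∈ range k, X i) - Real.log (∏ i ∈ range k, Y i) := by
        rw [Real.log_prod (fun i hi => ne_of_gt (hpos i (lt_of_lt_of_le (Finset.mem_range.mp hi) hk))),
          Real.log_prod (fun i hi => ne_of_gt (hYpos i (lt_of_lt_of_le (Finset.mem_range.mp hi) hk))),
          ← Finset.sum_sub_distrib]
      rw [hdlog]
      have hXp : 0 < ∏ i ∈ range k, X i :=
        Finset.prod_pos (fun i hi => hpos i (lt_of_lt_of_le (Finset.mem_range.mp hi) hk))
      have := Real.log_le_log hXp (h k (hk.trans hmn))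
      linarith
  have := Finset.sum_sub_distrib (s := range m)
    (f := fun i => Real.log (1 + X i)) (g := fun i => Real.log (1 + Y i))
  linarith [core, this ▸ core]

lemma compression_det_bound (hkn : k ≤ n) (E : Matrix (Fin n) (Fin n) ℂ)
    (hE : E.PosSemidef) (V : Matrix (Fin n) (Fin k) ℂ) :
    (Vᴴ * E * V).det.re
      ≤ (∏ j : Fin k, decSort hE.1.eigenvalues (Fin.castLE hkn j)) * (Vᴴ * V).det.re := by
  have spec : E = (hE.1.eigenvectorUnitary : Matrix (Fin n) (Fin n) ℂ)
      * Matrix.diagonal (RCLike.ofReal ∘ hE.1.eigenvalues)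
      * star (hE.1.eigenvectorUnitary : Matrix (Fin n) (Fin n) ℂ) := hE.1.spectral_theorem
  set U := (Matrix.IsHermitian.eigenvectorUnitary hE.1 : Matrix (Fin n) (Fin n) ℂ) with hU
  set M := star U * V with hM
  have hcast : Matrix.diagonal (RCLike.ofReal ∘ hE.1.eigenvalues)
      = Matrix.diagonal (fun i => ((hE.1.eigenvalues i : ℝ) : ℂ)) := rfl
  have hMH : Mᴴ = Vᴴ * U := by
    rw [hM, Matrix.conjTranspose_mul, Matrix.star_eq_conjTranspose, Matrix.conjTranspose_conjTranspose]
  have h1 : Vᴴ * E * V = Mᴴ * Matrix.diagonal (fun i => ((hE.1.eigenvalues i : ℝ) : ℂ)) * M := by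
    rw [hMH, hM, ← hcast]
    calc Vᴴ * E * V
        = Vᴴ * (U * Matrix.diagonal (RCLike.ofReal ∘ hE.1.eigenvalues) * star U) * V := by
          rw [← spec]
      _ = Vᴴ * U * (Matrix.diagonal (RCLike.ofReal ∘ hE.1.eigenvalues) : Matrix (Fin n) (Fin n) ℂ) * (star U * V) := by
          simp only [Matrix.mul_assoc]
  have hUU : U * star U = 1 := Matrix.mem_unitaryGroup_iff.mp (Matrix.IsHermitian.eigenvectorUnitary hE.1).2
  have h2 : Mᴴ * M = Vᴴ * V := by
    rw [hMH, hM]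
    calc Vᴴ * U * (star U * V) = Vᴴ * (U * star U) * V := by simp only [Matrix.mul_assoc]
      _ = Vᴴ * V := by rw [hUU, Matrix.mul_one]
  rw [h1, ← h2]
  exact key_ineq M _ _ (fun S hS =>
    prod_subset_le_prefix' _ (fun i => hE.eigenvalues_nonneg i) S hS hkn)

lemma submatrix_mul_left (X : Matrix (Fin n) (Fin n) ℂ) (Y : Matrix (Fin n) (Fin n) ℂ)
    (g : Fin k → Fin n) : X.submatrix g id * Y = (X * Y).submatrix g id := by
  ext i j; simp [Matrix.mul_apply, Matrix.submatrix_apply]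

lemma submatrix_mul_right (X : Matrix (Fin n) (Fin n) ℂ) (Y : Matrix (Fin n) (Fin n) ℂ)
    (g : Fin k → Fin n) : X * Y.submatrix id g = (X * Y).submatrix id g := by
  ext i j; simp [Matrix.mul_apply, Matrix.submatrix_apply]

lemma submatrix_mul_both (X Y : Matrix (Fin n) (Fin n) ℂ) (g h' : Fin k → Fin n) :
    X.submatrix g id * Y.submatrix id h' = (X * Y).submatrix g h' := by
  ext i j; simp [Matrix.mul_apply, Matrix.submatrix_apply]

lemma diagonal_submatrix (w : Fin n → ℂ) (g : Fin k → Fin n) (hg : Function.Injective g) :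
    (Matrix.diagonal w).submatrix g g = Matrix.diagonal (w ∘ g) := by
  ext i j
  by_cases hij : i = j
  · subst hij; simp [Matrix.submatrix_apply, Matrix.diagonal_apply]
  · rw [Matrix.submatrix_apply, Matrix.diagonal_apply_ne _ (fun h => hij (hg h)),
      Matrix.diagonal_apply_ne _ hij]

lemma one_submatrix (g : Fin k → Fin n) (hg : Function.Injective g) :
    (1 : Matrix (Fin n) (Fin n) ℂ).submatrix g g = 1 := by
  rw [← Matrix.diagonal_one, diagonal_submatrix _ g hg]
  rfl

open scoped MatrixOrder in
noncomputable def Matrix.PosSemidef.sqrt {n : ℕ} {A : Matrix (Fin n) (Fin n) ℂ} (_hA : A.PosSemidef) :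
    Matrix (Fin n) (Fin n) ℂ := CFC.sqrt A

open scoped MatrixOrder in
lemma Matrix.PosSemidef.posSemidef_sqrt {n : ℕ} {A : Matrix (Fin n) (Fin n) ℂ} (hA : A.PosSemidef) :
    hA.sqrt.PosSemidef := (CFC.sqrt_nonneg A).posSemidef

open scoped MatrixOrder in
lemma Matrix.PosSemidef.sqrt_mul_self {n : ℕ} {A : Matrix (Fin n) (Fin n) ℂ} (hA : A.PosSemidef) :
    hA.sqrt * hA.sqrt = A := CFC.sqrt_mul_sqrt_self A hA.nonneg

lemma prefix_products_le (hkn : k ≤ n) (A B C : Matrix (Fin n) (Fin n) ℂ)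
    (hA : A.PosSemidef) (hB : B.PosSemidef) (hC : C.PosSemidef)
    (hCeq : C = hA.sqrt * B * hA.sqrt) :
    ∏ j : Fin k, decSort hC.1.eigenvalues (Fin.castLE hkn j)
      ≤ (∏ j : Fin k, decSort hA.1.eigenvalues (Fin.castLE hkn j))
        * (∏ j : Fin k, decSort hB.1.eigenvalues (Fin.castLE hkn j)) := by
  obtain ⟨SA, hSA⟩ : ∃ SA, SA = hA.sqrt := ⟨_, rfl⟩
  obtain ⟨μ, hμ⟩ : ∃ μ, μ = hC.1.eigenvalues := ⟨_, rfl⟩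
  have hSAH : SAᴴ = SA := by rw [hSA]; exact hA.posSemidef_sqrt.1
  obtain ⟨U, hU⟩ : ∃ U, U = (Matrix.IsHermitian.eigenvectorUnitary hC.1 : Matrix (Fin n) (Fin n) ℂ) :=
    ⟨_, rfl⟩
  have hdiagC : star U * C * U = Matrix.diagonal (RCLike.ofReal ∘ μ) := by
    rw [hU, hμ]
    simpa using Matrix.IsHermitian.conjStarAlgAut_star_eigenvectorUnitary hC.1
  have hsUU : star U * U = 1 := by
    rw [hU]
    exact Matrix.mem_unitaryGroup_iff'.mp (Matrix.IsHermitian.eigenvectorUnitary hC.1).2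
  obtain ⟨g, hg⟩ : ∃ g : Fin k → Fin n,
      g = fun j => (Fin.revPerm.trans (Tuple.sort μ)) (Fin.castLE hkn j) := ⟨_, rfl⟩
  have hginj : Function.Injective g := by
    rw [hg]
    intro a b hab
    have := (Fin.revPerm.trans (Tuple.sort μ)).injective hab
    exact Fin.castLE_injective hkn this
  obtain ⟨V, hV⟩ : ∃ V, V = U.submatrix id g := ⟨_, rfl⟩
  have hVH : Vᴴ = (star U).submatrix g id := by
    rw [hV, Matrix.conjTranspose_submatrix, Matrix.star_eq_conjTranspose]
  have hVCV : Vᴴ * C * V = Matrix.diagonal ((RCLike.ofReal ∘ μ) ∘ g) := by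
    rw [hVH, hV, submatrix_mul_left, submatrix_mul_both, hdiagC, diagonal_submatrix _ g hginj]
  have hVV : Vᴴ * V = 1 := by
    rw [hVH, hV, submatrix_mul_both, hsUU, one_submatrix g hginj]
  have hdet1 : (Vᴴ * C * V).det.re = ∏ j : Fin k, decSort μ (Fin.castLE hkn j) := by
    rw [hVCV, Matrix.det_diagonal]
    have h1 : ∏ j : Fin k, ((RCLike.ofReal ∘ μ) ∘ g) j
        = (((∏ j : Fin k, μ (g j) : ℝ)) : ℂ) := by
      rw [Complex.ofReal_prod]
      rfl
    rw [h1, Complex.ofReal_re]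
    apply Finset.prod_congr rfl
    intro j _
    rw [hg]
    rfl
  obtain ⟨W, hW⟩ : ∃ W, W = SA * V := ⟨_, rfl⟩
  have hWBW : Vᴴ * C * V = Wᴴ * B * W := by
    rw [hW, Matrix.conjTranspose_mul, hSAH, hCeq, ← hSA]
    simp only [Matrix.mul_assoc]
  have hWW : Wᴴ * W = Vᴴ * A * V := by
    rw [hW, Matrix.conjTranspose_mul, hSAH]
    calc Vᴴ * SA * (SA * V) = Vᴴ * (SA * SA) * V := by simp only [Matrix.mul_assoc]
      _ = Vᴴ * A * V := by rw [hSA, hA.sqrt_mul_self]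
  have step1 : (Vᴴ * C * V).det.re
      ≤ (∏ j : Fin k, decSort hB.1.eigenvalues (Fin.castLE hkn j)) * (Vᴴ * A * V).det.re := by
    rw [hWBW, ← hWW]
    exact compression_det_bound hkn B hB W
  have step2 : (Vᴴ * A * V).det.re
      ≤ (∏ j : Fin k, decSort hA.1.eigenvalues (Fin.castLE hkn j)) * 1 := by
    have := compression_det_bound hkn A hA V
    rwa [hVV, Matrix.det_one, Complex.one_re] at this
  have hbnn : 0 ≤ ∏ j : Fin k, decSort hB.1.eigenvalues (Fin.castLE hkn j) :=
    Finset.prod_nonneg (fun j _ => by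
      have h2 : decSort hB.1.eigenvalues (Fin.castLE hkn j)
          = hB.1.eigenvalues ((Fin.revPerm.trans (Tuple.sort hB.1.eigenvalues)) (Fin.castLE hkn j)) :=
        rfl
      rw [h2]; exact hB.eigenvalues_nonneg _)
  calc ∏ j : Fin k, decSort hC.1.eigenvalues (Fin.castLE hkn j)
      = (Vᴴ * C * V).det.re := by rw [hdet1, hμ]
    _ ≤ (∏ j : Fin k, decSort hB.1.eigenvalues (Fin.castLE hkn j)) * (Vᴴ * A * V).det.re := step1
    _ ≤ (∏ j : Fin k, decSort hB.1.eigenvalues (Fin.castLE hkn j))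
        * ((∏ j : Fin k, decSort hA.1.eigenvalues (Fin.castLE hkn j)) * 1) :=
        mul_le_mul_of_nonneg_left step2 hbnn
    _ = _ := by ring

lemma det_one_add_psd (A B C : Matrix (Fin n) (Fin n) ℂ) (hA : A.PosSemidef)
    (hC : C.PosSemidef) (hCeq : C = hA.sqrt * B * hA.sqrt) :
    (1 + A * B).det = (((∏ i, (1 + hC.1.eigenvalues i)) : ℝ) : ℂ) := by
  have h1 : (1 + A * B).det = (1 + C).det := by
    conv_lhs => rw [← hA.sqrt_mul_self, Matrix.mul_assoc, Matrix.det_one_add_mul_comm]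
    rw [hCeq, Matrix.mul_assoc]
  obtain ⟨U, hU⟩ : ∃ U, U = (Matrix.IsHermitian.eigenvectorUnitary hC.1 : Matrix (Fin n) (Fin n) ℂ) :=
    ⟨_, rfl⟩
  have hspec : C = U * Matrix.diagonal (RCLike.ofReal ∘ hC.1.eigenvalues) * star U := by
    rw [hU]; exact hC.1.spectral_theorem
  have hUU : U * star U = 1 := by
    rw [hU]; exact Matrix.mem_unitaryGroup_iff.mp (Matrix.IsHermitian.eigenvectorUnitary hC.1).2
  have h2 : (1 : Matrix (Fin n) (Fin n) ℂ) + C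
      = U * (Matrix.diagonal (fun i => 1 + RCLike.ofReal (hC.1.eigenvalues i))) * star U := by
    have hone : (1 : Matrix (Fin n) (Fin n) ℂ) = U * 1 * star U := by
      rw [Matrix.mul_one, hUU]
    have hdadd : (Matrix.diagonal (fun i => 1 + RCLike.ofReal (hC.1.eigenvalues i))
        : Matrix (Fin n) (Fin n) ℂ)
        = 1 + Matrix.diagonal (RCLike.ofReal ∘ hC.1.eigenvalues) := by
      rw [← Matrix.diagonal_one, Matrix.diagonal_add]
      rfl
    rw [hdadd, Matrix.mul_add, Matrix.add_mul, ← hone, ← hspec]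
  have hsUU : star U * U = 1 := by
    rw [hU]; exact Matrix.mem_unitaryGroup_iff'.mp (Matrix.IsHermitian.eigenvectorUnitary hC.1).2
  have h3 : (1 + C).det = ∏ i, (1 + (hC.1.eigenvalues i : ℂ)) := by
    rw [h2, Matrix.det_mul, Matrix.det_mul, mul_comm, ← mul_assoc, ← Matrix.det_mul, hsUU,
      Matrix.det_one, one_mul, Matrix.det_diagonal]
    rfl
  rw [h1, h3]
  push_cast
  rfl

lemma weak_log_maj_fin (x y : Fin n → ℝ) (hx : Antitone x) (hx0 : ∀ i, 0 ≤ x i)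
    (hy0 : ∀ i, 0 ≤ y i)
    (h : ∀ (k : ℕ) (hk : k ≤ n), ∏ j : Fin k, x (Fin.castLE hk j) ≤ ∏ j : Fin k, y (Fin.castLE hk j)) :
    ∑ i, Real.log (1 + x i) ≤ ∑ i, Real.log (1 + y i) := by
  classical
  set X : ℕ → ℝ := fun i => if h : i < n then x ⟨i, h⟩ else 0 with hX
  set Y : ℕ → ℝ := fun i => if h : i < n then y ⟨i, h⟩ else 0 with hY
  have hXv : ∀ (i : ℕ) (hi : i < n), X i = x ⟨i, hi⟩ := fun i hi => dif_pos hi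
  have hYv : ∀ (i : ℕ) (hi : i < n), Y i = y ⟨i, hi⟩ := fun i hi => dif_pos hi
  have hXa : Antitone X := by
    intro i j hij
    by_cases hjn : j < n
    · have hin : i < n := lt_of_le_of_lt hij hjn
      rw [hXv i hin, hXv j hjn]
      exact hx (by exact hij)
    · rw [hX]
      simp only [dif_neg hjn]
      by_cases hin : i < n
      · rw [dif_pos hin]; exact hx0 _
      · rw [dif_neg hin]
  have hX0 : ∀ i, 0 ≤ X i := by
    intro i; by_cases hi : i < n
    · rw [hXv i hi]; exact hx0 _
    · rw [hX]; simp [dif_neg hi]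
  have hY0 : ∀ i, 0 ≤ Y i := by
    intro i; by_cases hi : i < n
    · rw [hYv i hi]; exact hy0 _
    · rw [hY]; simp [dif_neg hi]
  have hXt : ∀ i, n ≤ i → X i = 0 := by
    intro i hi; rw [hX]; simp [dif_neg (Nat.not_lt.mpr hi)]
  have hprod : ∀ (k : ℕ) (hk : k ≤ n), ∏ i ∈ range k, X i = ∏ j : Fin k, x (Fin.castLE hk j) := by
    intro k hk
    rw [← Fin.prod_univ_eq_prod_range]
    apply Finset.prod_congr rfl
    intro j _
    rw [hXv j.1 (lt_of_lt_of_le j.2 hk)]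
    rfl
  have hprodY : ∀ (k : ℕ) (hk : k ≤ n), ∏ i ∈ range k, Y i = ∏ j : Fin k, y (Fin.castLE hk j) := by
    intro k hk
    rw [← Fin.prod_univ_eq_prod_range]
    apply Finset.prod_congr rfl
    intro j _
    rw [hYv j.1 (lt_of_lt_of_le j.2 hk)]
    rfl
  have hmain := weak_log_maj_nat n X Y hXa hX0 hY0 hXt (by
    intro k hk
    rw [hprod k hk, hprodY k hk]
    exact h k hk)
  have hfinX : ∑ i, Real.log (1 + x i) = ∑ i ∈ range n, Real.log (1 + X i) := by
    rw [← Fin.sum_univ_eq_sum_range]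
    apply Finset.sum_congr rfl
    intro i _
    rw [hXv i.1 i.2]
  have hfinY : ∑ i, Real.log (1 + y i) = ∑ i ∈ range n, Real.log (1 + Y i) := by
    rw [← Fin.sum_univ_eq_sum_range]
    apply Finset.sum_congr rfl
    intro i _
    rw [hYv i.1 i.2]
  rw [hfinX, hfinY]
  exact hmain

end Helpers

/-- Lemma 2: for positive semidefinite Hermitian `A`, `B` with decreasingly ordered
eigenvalues `α`, `β`, one has `log det(I + A·B) ≤ Σᵢ log(1 + αᵢ·βᵢ)`. -/
theorem logdet_le_sum_log_ordered_eigenvalues {n : ℕ}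
    (A B : Matrix (Fin n) (Fin n) ℂ) (hA : A.PosSemidef) (hB : B.PosSemidef)
    (α β : Fin n → ℝ) (hαanti : Antitone α) (hβanti : Antitone β)
    (hα : ∃ σ : Equiv.Perm (Fin n), ∀ i, α i = hA.1.eigenvalues (σ i))
    (hβ : ∃ σ : Equiv.Perm (Fin n), ∀ i, β i = hB.1.eigenvalues (σ i)) :
    Real.log ((1 + A * B).det.re) ≤ ∑ i, Real.log (1 + α i * β i) := by
  obtain ⟨σa, hσa⟩ := hα
  obtain ⟨σb, hσb⟩ := hβ
  have hC : (hA.sqrt * B * hA.sqrt).PosSemidef := by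
    have h := hB.conjTranspose_mul_mul_same hA.sqrt
    rwa [hA.posSemidef_sqrt.1] at h
  have hαeq : α = decSort hA.1.eigenvalues := antitone_eq_decSort _ α hαanti σa hσa
  have hβeq : β = decSort hB.1.eigenvalues := antitone_eq_decSort _ β hβanti σb hσb
  have hα0 : ∀ i, 0 ≤ α i := fun i => (hσa i) ▸ hA.eigenvalues_nonneg (σa i)
  have hβ0 : ∀ i, 0 ≤ β i := fun i => (hσb i) ▸ hB.eigenvalues_nonneg (σb i)
  have hμ0 : ∀ i, 0 ≤ hC.1.eigenvalues i := fun i => hC.eigenvalues_nonneg i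
  have hdet := det_one_add_psd A B _ hA hC rfl
  have hdetre : (1 + A * B).det.re = ∏ i, (1 + hC.1.eigenvalues i) := by
    rw [hdet, Complex.ofReal_re]
  rw [hdetre]
  have hlog : Real.log (∏ i, (1 + hC.1.eigenvalues i))
      = ∑ i, Real.log (1 + hC.1.eigenvalues i) :=
    Real.log_prod (fun i _ => ne_of_gt (by linarith [hμ0 i]))
  rw [hlog]
  have hreord : ∑ i, Real.log (1 + hC.1.eigenvalues i)
      = ∑ i, Real.log (1 + decSort hC.1.eigenvalues i) :=
    (Equiv.sum_comp (Fin.revPerm.trans (Tuple.sort hC.1.eigenvalues))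
      (fun i => Real.log (1 + hC.1.eigenvalues i))).symm
  rw [hreord]
  have hμdec0 : ∀ i, 0 ≤ decSort hC.1.eigenvalues i := fun i => by
    rw [decSort_perm]; exact hμ0 _
  apply weak_log_maj_fin _ _ (decSort_antitone _) hμdec0
    (fun i => mul_nonneg (hα0 i) (hβ0 i))
  intro k hk
  have h1 := prefix_products_le hk A B _ hA hB hC rfl
  calc ∏ j : Fin k, decSort hC.1.eigenvalues (Fin.castLE hk j)
      ≤ (∏ j : Fin k, decSort hA.1.eigenvalues (Fin.castLE hk j))
        * (∏ j : Fin k, decSort hB.1.eigenvalues (Fin.castLE hk j)) := h1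
    _ = ∏ j : Fin k, α (Fin.castLE hk j) * β (Fin.castLE hk j) := by
        rw [← Finset.prod_mul_distrib, hαeq, hβeq]
end

section
/- Let A, B be n×n positive semidefinite Hermitian matrices. The vector of eigenvalues of A·B (which are real and nonnegative), arranged in decreasing order, is log-majorized by the componentwise product of the decreasingly ordered eigenvalue vectors of A and B. -/
open Matrix ComplexOrder Finset Polynomial

private lemma image_orderEmbOfFin {n k : ℕ} (S : Finset (Fin n)) (h : S.card = k) :
    Finset.image (S.orderEmbOfFin h) Finset.univ = S := by
  apply Finset.coe_injective
  rw [Finset.coe_image, Finset.coe_univ, Set.image_univ, Finset.range_orderEmbOfFin]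

private lemma prod_orderEmbOfFin' {n k : ℕ} {M : Type*} [CommMonoid M]
    (S : Finset (Fin n)) (h : S.card = k)
    (f : Fin n → M) : ∏ j : Fin k, f (S.orderEmbOfFin h j) = ∏ i ∈ S, f i := by
  conv_rhs => rw [← image_orderEmbOfFin S h]
  rw [Finset.prod_image]
  intro x _ y _ hxy
  exact (S.orderEmbOfFin h).injective hxy

private lemma orderEmbOfFin_congr {n k : ℕ} {S S' : Finset (Fin n)} (hSS : S = S')
    (hS : S.card = k) (hS' : S'.card = k) (a : Fin k) :
    S.orderEmbOfFin hS a = S'.orderEmbOfFin hS' a := by subst hSS; rfl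

private lemma cb_det {n k : ℕ} (W : Matrix (Fin n) (Fin k) ℂ) (d : Fin n → ℝ) :
    (Wᴴ * Matrix.diagonal (fun i => (d i : ℂ)) * W).det
      = ∑ S ∈ (Finset.powersetCard k (Finset.univ : Finset (Fin n))).attach,
          ((∏ i ∈ S.1, d i : ℝ) : ℂ) *
            ((Complex.normSq ((W.submatrix (S.1.orderEmbOfFin
              (Finset.mem_powersetCard_univ.mp S.2)) id).det) : ℝ) : ℂ) := by
  classical
  set T : (Fin k → Fin n) → ℂ := fun r =>
    (∏ a : Fin k, ((d (r a) : ℂ) * (starRingEnd ℂ) (W (r a) a))) * (W.submatrix r id).det with hT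
  have hrow : (Wᴴ * Matrix.diagonal (fun i => (d i : ℂ)) * W)
      = fun a => ∑ i : Fin n, ((d i : ℂ) * (starRingEnd ℂ) (W i a)) • (fun b => W i b) := by
    funext a b
    simp only [Matrix.mul_apply, Matrix.diagonal_apply, conjTranspose_apply,
      Finset.sum_apply, Pi.smul_apply, smul_eq_mul, mul_ite, mul_zero, ite_mul, zero_mul,
      Finset.sum_ite_eq, Finset.sum_ite_eq', Finset.mem_univ, if_true]
    exact Finset.sum_congr rfl fun i _ => by simp only [RCLike.star_def]; ring
  have step1 : (Wᴴ * Matrix.diagonal (fun i => (d i : ℂ)) * W).det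
      = ∑ r : Fin k → Fin n, T r := by
    rw [show (Wᴴ * Matrix.diagonal (fun i => (d i : ℂ)) * W).det
        = Matrix.detRowAlternating (Wᴴ * Matrix.diagonal (fun i => (d i : ℂ)) * W) from rfl,
      hrow]
    rw [show (Matrix.detRowAlternating
        (fun a => ∑ i : Fin n, ((d i : ℂ) * (starRingEnd ℂ) (W i a)) • (fun b => W i b)) : ℂ)
      = Matrix.detRowAlternating.toMultilinearMap
        (fun a => ∑ i : Fin n, ((d i : ℂ) * (starRingEnd ℂ) (W i a)) • (fun b => W i b)) from rfl]
    rw [MultilinearMap.map_sum]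
    refine Finset.sum_congr rfl fun r _ => ?_
    have := Matrix.detRowAlternating.toMultilinearMap.map_smul_univ
      (fun a => (d (r a) : ℂ) * (starRingEnd ℂ) (W (r a) a))
      (fun a => (fun b => W (r a) b))
    exact this
  have step2 : ∑ r : Fin k → Fin n, T r
      = ∑ r ∈ Finset.univ.filter (fun r : Fin k → Fin n => Function.Injective r), T r := by
    rw [← Finset.sum_filter_add_sum_filter_not Finset.univ
      (fun r : Fin k → Fin n => Function.Injective r) T]
    have hz : ∑ r ∈ Finset.univ.filter
        (fun r : Fin k → Fin n => ¬ Function.Injective r), T r = 0 := by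
      refine Finset.sum_eq_zero fun r hr => ?_
      rw [Finset.mem_filter] at hr
      obtain ⟨a, b, hab, hne⟩ := Function.not_injective_iff.mp hr.2
      have hdet : (W.submatrix r id).det = 0 :=
        Matrix.det_zero_of_row_eq hne (by funext c; simp [Matrix.submatrix_apply, hab])
      simp [hT, hdet]
    rw [hz, add_zero]
  have inner : ∀ (S : Finset (Fin n)) (h : S.card = k),
      ((∏ i ∈ S, d i : ℝ) : ℂ) *
          ((Complex.normSq ((W.submatrix (S.orderEmbOfFin h) id).det) : ℝ) : ℂ)
        = ∑ π : Equiv.Perm (Fin k), T (S.orderEmbOfFin h ∘ π) := by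
    intro S h
    have hTe : ∀ π : Equiv.Perm (Fin k), T (⇑(S.orderEmbOfFin h) ∘ ⇑π)
        = (∏ i ∈ S, (d i : ℂ)) * (W.submatrix (⇑(S.orderEmbOfFin h)) id).det *
            (((Equiv.Perm.sign π : ℤ) : ℂ)
              * ∏ a : Fin k, (starRingEnd ℂ) (W (S.orderEmbOfFin h (π a)) a)) := by
      intro π
      have hsub : W.submatrix (⇑(S.orderEmbOfFin h) ∘ ⇑π) id
          = (W.submatrix (⇑(S.orderEmbOfFin h)) id).submatrix (⇑π) id := rfl
      have h1 : ∏ a : Fin k, (d (S.orderEmbOfFin h (π a)) : ℂ) = ∏ i ∈ S, (d i : ℂ) := by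
        rw [Equiv.prod_comp π (fun a => (d (S.orderEmbOfFin h a) : ℂ))]
        exact prod_orderEmbOfFin' S h (fun x => (d x : ℂ))
      rw [hT]
      simp only [Function.comp_apply, Finset.prod_mul_distrib, h1, hsub, Matrix.det_permute]
      ring
    have hconj : ∑ π : Equiv.Perm (Fin k),
        (((Equiv.Perm.sign π : ℤ) : ℂ)
          * ∏ a : Fin k, (starRingEnd ℂ) (W (S.orderEmbOfFin h (π a)) a))
        = (starRingEnd ℂ) ((W.submatrix (⇑(S.orderEmbOfFin h)) id).det) := by
      rw [Matrix.det_apply', _root_.map_sum]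
      refine Finset.sum_congr rfl fun π _ => ?_
      simp [Matrix.submatrix_apply, _root_.map_mul, _root_.map_prod]
    calc ((∏ i ∈ S, d i : ℝ) : ℂ) *
          ((Complex.normSq ((W.submatrix (S.orderEmbOfFin h) id).det) : ℝ) : ℂ)
        = (∏ i ∈ S, (d i : ℂ)) * ((W.submatrix (⇑(S.orderEmbOfFin h)) id).det *
            (starRingEnd ℂ) ((W.submatrix (⇑(S.orderEmbOfFin h)) id).det)) := by
          rw [Complex.mul_conj, Complex.ofReal_prod]
      _ = ∑ π : Equiv.Perm (Fin k), T (S.orderEmbOfFin h ∘ π) := by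
          rw [Finset.sum_congr rfl (fun π _ => hTe π), ← Finset.mul_sum, hconj]
          ring
  rw [step1, step2]
  have main : ∑ r ∈ Finset.univ.filter (fun r : Fin k → Fin n => Function.Injective r), T r
      = ∑ p ∈ (Finset.powersetCard k (Finset.univ : Finset (Fin n))).attach ×ˢ
          (Finset.univ : Finset (Equiv.Perm (Fin k))),
          T ((p.1.1.orderEmbOfFin (Finset.mem_powersetCard_univ.mp p.1.2)) ∘ p.2) := by
    set rec : {x // x ∈ Finset.powersetCard k (Finset.univ : Finset (Fin n))} × Equiv.Perm (Fin k)
        → (Fin k → Fin n) :=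
      fun p => (⇑(p.1.1.orderEmbOfFin (Finset.mem_powersetCard_univ.mp p.1.2)) ∘ ⇑p.2) with hrec
    have himg : ∀ p, Finset.image (rec p) Finset.univ = p.1.1 := by
      intro p
      rw [hrec]
      rw [← Finset.image_image, Finset.image_univ_equiv, image_orderEmbOfFin]
    have hrecinj : Function.Injective rec := by
      intro p q hpq
      have hS : p.1.1 = q.1.1 := by rw [← himg p, ← himg q, hpq]
      refine Prod.ext (Subtype.ext hS) (Equiv.ext fun a => ?_)
      have hcf := congrFun hpq a
      simp only [hrec, Function.comp_apply] at hcf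
      rw [orderEmbOfFin_congr hS (Finset.mem_powersetCard_univ.mp p.1.2)
        (Finset.mem_powersetCard_univ.mp q.1.2) (p.2 a)] at hcf
      exact (q.1.1.orderEmbOfFin (Finset.mem_powersetCard_univ.mp q.1.2)).injective hcf
    symm
    refine Finset.sum_bij (i := fun p _ => rec p) ?_ ?_ ?_ ?_
    · intro p _
      refine Finset.mem_filter.mpr ⟨Finset.mem_univ _, ?_⟩
      exact (Function.Embedding.injective _).comp p.2.injective
    · intro p _ q _ h
      exact hrecinj h
    · intro r hr
      have hinj := (Finset.mem_filter.mp hr).2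
      have hcard : (Finset.image r Finset.univ).card = k := by
        rw [Finset.card_image_of_injective _ hinj, Finset.card_univ, Fintype.card_fin]
      refine ⟨(⟨Finset.image r Finset.univ, Finset.mem_powersetCard_univ.mpr hcard⟩,
        Equiv.ofBijective (fun a => ((Finset.image r Finset.univ).orderIsoOfFin hcard).symm
            ⟨r a, Finset.mem_image_of_mem r (Finset.mem_univ a)⟩)
          (Finite.injective_iff_bijective.mp (fun a b hab => hinj (by
            have := congrArg
              (fun x => (((Finset.image r Finset.univ).orderIsoOfFin hcard) x : Fin n)) hab
            simpa using this)))),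
        Finset.mem_product.mpr ⟨Finset.mem_attach _ _, Finset.mem_univ _⟩, ?_⟩
      funext a
      simp only [hrec, Function.comp_apply, Equiv.ofBijective_apply]
      rw [← Finset.coe_orderIsoOfFin_apply, OrderIso.apply_symm_apply]
    · intro p _
      rfl
  rw [main, Finset.sum_product]
  refine Finset.sum_congr rfl fun S _ => ?_
  exact (inner S.1 (Finset.mem_powersetCard_univ.mp S.2)).symm


private lemma filter_lt_eq_image {n k : ℕ} (hk : k ≤ n) :
    Finset.univ.filter (fun i : Fin n => (i : ℕ) < k) =
      Finset.image (fun j : Fin k => Fin.castLE hk j) Finset.univ := by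
  ext i
  simp only [Finset.mem_filter, Finset.mem_univ, true_and, Finset.mem_image]
  constructor
  · intro hi
    exact ⟨⟨i.1, hi⟩, rfl⟩
  · rintro ⟨j, rfl⟩
    exact j.2

private lemma prod_filter_lt {n k : ℕ} (hk : k ≤ n) {M : Type*} [CommMonoid M]
    (f : Fin n → M) :
    ∏ i ∈ Finset.univ.filter (fun i : Fin n => (i : ℕ) < k), f i
      = ∏ j : Fin k, f (Fin.castLE hk j) := by
  rw [filter_lt_eq_image hk, Finset.prod_image]
  intro x _ y _ hxy
  exact Fin.castLE_injective hk hxy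

private lemma le_orderEmbOfFin {n k : ℕ} (S : Finset (Fin n)) (hS : S.card = k) :
    ∀ m (h : m < k), m ≤ ((S.orderEmbOfFin hS) ⟨m, h⟩ : ℕ) := by
  intro m
  induction m with
  | zero => exact fun _ => Nat.zero_le _
  | succ m ih =>
    intro h
    have hm : m < k := Nat.lt_of_succ_lt h
    have h1 : ((S.orderEmbOfFin hS) ⟨m, hm⟩ : ℕ) < ((S.orderEmbOfFin hS) ⟨m + 1, h⟩ : ℕ) := by
      have : (⟨m, hm⟩ : Fin k) < ⟨m + 1, h⟩ := by
        simp [Fin.lt_def]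
      exact (S.orderEmbOfFin hS).strictMono this
    have := ih hm
    omega

private lemma prod_subset_le_topk {n k : ℕ} (hk : k ≤ n) (α : Fin n → ℝ)
    (hanti : Antitone α) (h0 : ∀ i, 0 ≤ α i) (S : Finset (Fin n)) (hS : S.card = k) :
    ∏ i ∈ S, α i ≤ ∏ i ∈ Finset.univ.filter (fun i : Fin n => (i : ℕ) < k), α i := by
  rw [prod_filter_lt hk α, ← prod_orderEmbOfFin' S hS α]
  refine Finset.prod_le_prod (fun j _ => h0 _) (fun j _ => hanti ?_)
  have := le_orderEmbOfFin S hS j.1 j.2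
  rw [Fin.le_def]
  simpa [Fin.castLE] using this

private lemma conj_submatrix {n k : ℕ} (V M : Matrix (Fin n) (Fin n) ℂ) (f : Fin k → Fin n) :
    (V.submatrix id f)ᴴ * M * (V.submatrix id f) = (Vᴴ * M * V).submatrix f f := by
  ext a b
  simp [Matrix.mul_apply, Matrix.submatrix_apply, Matrix.conjTranspose_apply]

private lemma eval_charpoly' {n : ℕ} (M : Matrix (Fin n) (Fin n) ℂ) (x : ℂ) :
    Polynomial.eval x M.charpoly = (Matrix.diagonal (fun _ => x) - M).det := by
  rw [Matrix.charpoly, ← Polynomial.coe_evalRingHom, RingHom.map_det]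
  congr 1
  ext i j
  by_cases hij : i = j <;>
    simp [Matrix.charmatrix_apply, Matrix.diagonal_apply, hij, Matrix.sub_apply]

private lemma det_shift_mul_comm {n : ℕ} (M N : Matrix (Fin n) (Fin n) ℂ) {x : ℂ}
    (hx : x ≠ 0) :
    (Matrix.diagonal (fun _ => x) - M * N).det = (Matrix.diagonal (fun _ => x) - N * M).det := by
  have hdiag : (Matrix.diagonal (fun _ : Fin n => x) : Matrix (Fin n) (Fin n) ℂ) = x • 1 := by
    rw [Matrix.smul_one_eq_diagonal]
  have key : ∀ P Q : Matrix (Fin n) (Fin n) ℂ,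
      x • ((1 : Matrix (Fin n) (Fin n) ℂ) - (x⁻¹ • P) * Q) = x • 1 - P * Q := by
    intro P Q
    rw [smul_sub, Matrix.smul_mul, smul_smul, mul_inv_cancel₀ hx, one_smul]
  have key2 : ∀ P Q : Matrix (Fin n) (Fin n) ℂ,
      x • ((1 : Matrix (Fin n) (Fin n) ℂ) - Q * (x⁻¹ • P)) = x • 1 - Q * P := by
    intro P Q
    rw [smul_sub, Matrix.mul_smul, smul_smul, mul_inv_cancel₀ hx, one_smul]
  rw [hdiag, ← key M N, ← key2 M N, Matrix.det_smul, Matrix.det_smul,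
    Matrix.det_one_sub_mul_comm]

open scoped MatrixOrder in
private noncomputable def psdSqrt {n : ℕ} (B : Matrix (Fin n) (Fin n) ℂ) :
    Matrix (Fin n) (Fin n) ℂ := CFC.sqrt B

open scoped MatrixOrder in
private lemma psdSqrt_posSemidef {n : ℕ} {B : Matrix (Fin n) (Fin n) ℂ} (hB : B.PosSemidef) :
    (psdSqrt B).PosSemidef := (CFC.sqrt_nonneg B).posSemidef

open scoped MatrixOrder in
private lemma psdSqrt_mul_self {n : ℕ} {B : Matrix (Fin n) (Fin n) ℂ} (hB : B.PosSemidef) :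
    psdSqrt B * psdSqrt B = B := CFC.sqrt_mul_sqrt_self B hB.nonneg

private lemma herm_spectral {n : ℕ} {A : Matrix (Fin n) (Fin n) ℂ} (hA : A.IsHermitian) :
    A = (hA.eigenvectorUnitary : Matrix (Fin n) (Fin n) ℂ) *
      Matrix.diagonal (RCLike.ofReal ∘ hA.eigenvalues) *
      star (hA.eigenvectorUnitary : Matrix (Fin n) (Fin n) ℂ) := by
  conv_lhs => rw [hA.spectral_theorem]
  rfl

private lemma herm_star_mul_self_mul_eq_diagonal {n : ℕ} {A : Matrix (Fin n) (Fin n) ℂ}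
    (hA : A.IsHermitian) :
    star (hA.eigenvectorUnitary : Matrix (Fin n) (Fin n) ℂ) * A *
      (hA.eigenvectorUnitary : Matrix (Fin n) (Fin n) ℂ) =
      Matrix.diagonal (RCLike.ofReal ∘ hA.eigenvalues) := by
  rw [← hA.conjStarAlgAut_star_eigenvectorUnitary, Unitary.conjStarAlgAut_star_apply]

set_option maxHeartbeats 1000000 in
/-- For positive semidefinite Hermitian `A, B`, the eigenvalues of `A·B` are real,
nonnegative, and (arranged decreasingly) log-majorized by the componentwise product
of the decreasingly ordered eigenvalue vectors of `A` and `B`. -/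
theorem eigenvalues_mul_log_majorized {n : ℕ}
    (A B : Matrix (Fin n) (Fin n) ℂ) (hA : A.PosSemidef) (hB : B.PosSemidef)
    (α β : Fin n → ℝ) (hαanti : Antitone α) (hβanti : Antitone β)
    (hα : ∃ σ : Equiv.Perm (Fin n), ∀ i, α i = hA.1.eigenvalues (σ i))
    (hβ : ∃ σ : Equiv.Perm (Fin n), ∀ i, β i = hB.1.eigenvalues (σ i)) :
    ∃ μ : Fin n → ℝ, Antitone μ ∧ (∀ i, 0 ≤ μ i) ∧
      (A * B).charpoly = ∏ i, (Polynomial.X - Polynomial.C ((μ i : ℂ))) ∧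
      (∀ k : ℕ, k ≤ n →
        ∏ i ∈ Finset.univ.filter (fun i : Fin n => (i : ℕ) < k), μ i ≤
        ∏ i ∈ Finset.univ.filter (fun i : Fin n => (i : ℕ) < k), (α i * β i)) ∧
      ∏ i, μ i = ∏ i, (α i * β i) := by
  classical
  obtain ⟨σA, hσA⟩ := hα
  obtain ⟨σB, hσB⟩ := hβ
  set S : Matrix (Fin n) (Fin n) ℂ := psdSqrt B with hSdef
  have hSps : S.PosSemidef := psdSqrt_posSemidef hB
  have hSH : Sᴴ = S := hSps.1
  have hSS : S * S = B := psdSqrt_mul_self hB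
  have hC : (S * A * S).PosSemidef := by
    have h := hA.mul_mul_conjTranspose_same S
    rwa [hSH] at h
  set ν : Fin n → ℝ := hC.1.eigenvalues with hν
  set p : Equiv.Perm (Fin n) := (Fin.revPerm.trans (Tuple.sort ν)) with hp
  refine ⟨fun i => ν (p i), ?_, fun i => hC.eigenvalues_nonneg _, ?_, ?_, ?_⟩
  · intro i j hij
    exact Tuple.monotone_sort ν (Fin.rev_le_rev.mpr hij)
  · -- charpoly
    set V : Matrix (Fin n) (Fin n) ℂ := (hC.1.eigenvectorUnitary : Matrix (Fin n) (Fin n) ℂ)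
      with hV
    have hVunit : star V * V = 1 := Matrix.mem_unitaryGroup_iff'.mp (hC.1.eigenvectorUnitary).2
    have hVunit' : V * star V = 1 := Matrix.mem_unitaryGroup_iff.mp (hC.1.eigenvectorUnitary).2
    have hspec : S * A * S = V * Matrix.diagonal (RCLike.ofReal ∘ ν) * star V :=
      herm_spectral hC.1
    apply Polynomial.eq_of_infinite_eval_eq
    have hinf : ({(0:ℂ)}ᶜ : Set ℂ).Infinite := (Set.finite_singleton (0:ℂ)).infinite_compl
    refine hinf.mono ?_
    intro x hx
    have hx0 : x ≠ 0 := by simpa using hx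
    show Polynomial.eval x (A*B).charpoly = Polynomial.eval x (∏ i, (X - Polynomial.C _))
    rw [eval_charpoly']
    have hAB : A * B = (A * S) * S := by rw [Matrix.mul_assoc, hSS]
    rw [hAB, det_shift_mul_comm _ _ hx0, show S * (A * S) = S * A * S from
      (Matrix.mul_assoc S A S).symm, hspec]
    have h2 : V * Matrix.diagonal (fun _ : Fin n => x) * star V
        = Matrix.diagonal (fun _ : Fin n => x) := by
      rw [← Matrix.smul_one_eq_diagonal, Matrix.mul_smul, Matrix.mul_one, Matrix.smul_mul,
        hVunit']
    have h3 : Matrix.diagonal (fun _ : Fin n => x)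
          - V * Matrix.diagonal (RCLike.ofReal ∘ ν) * star V
        = V * (Matrix.diagonal (fun _ : Fin n => x)
            - Matrix.diagonal (RCLike.ofReal ∘ ν)) * star V := by
      rw [Matrix.mul_sub, Matrix.sub_mul]
      congr 1
      exact h2.symm
    rw [h3, Matrix.det_mul, Matrix.det_mul]
    have h4 : V.det * (star V).det = 1 := by rw [← Matrix.det_mul, hVunit', Matrix.det_one]
    have h5 : (Matrix.diagonal (fun _ : Fin n => x)
        - Matrix.diagonal (RCLike.ofReal ∘ ν)).det = ∏ i, (x - (ν i : ℂ)) := by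
      rw [Matrix.diagonal_sub, Matrix.det_diagonal]
      exact Finset.prod_congr rfl fun i _ => by simp [Pi.sub_apply, Function.comp_apply]
    have h6 : ∏ i, (x - (ν i : ℂ)) = ∏ i, (x - (ν (p i) : ℂ)) :=
      (Equiv.prod_comp p (fun i => x - (ν i : ℂ))).symm
    rw [Polynomial.eval_prod]
    simp only [Polynomial.eval_sub, Polynomial.eval_X, Polynomial.eval_C]
    calc V.det * (Matrix.diagonal (fun _ : Fin n => x)
            - Matrix.diagonal (RCLike.ofReal ∘ ν)).det * (star V).det
        = (Matrix.diagonal (fun _ : Fin n => x)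
            - Matrix.diagonal (RCLike.ofReal ∘ ν)).det * (V.det * (star V).det) := by ring
      _ = ∏ i, (x - (ν (p i) : ℂ)) := by rw [h4, h5, mul_one, h6]
  · -- log-majorization inequalities
    intro k hk
    have hco : ∀ g : Fin n → ℝ, (RCLike.ofReal ∘ g) = fun i => ((g i) : ℂ) := fun g => rfl
    set eA : Fin n → ℝ := hA.1.eigenvalues with heA
    set eB : Fin n → ℝ := hB.1.eigenvalues with heB
    set QA : Matrix (Fin n) (Fin n) ℂ := (hA.1.eigenvectorUnitary : Matrix (Fin n) (Fin n) ℂ)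
      with hQA
    set QB : Matrix (Fin n) (Fin n) ℂ := (hB.1.eigenvectorUnitary : Matrix (Fin n) (Fin n) ℂ)
      with hQB
    set V : Matrix (Fin n) (Fin n) ℂ := (hC.1.eigenvectorUnitary : Matrix (Fin n) (Fin n) ℂ)
      with hV
    have hQAu : QA * star QA = 1 := Matrix.mem_unitaryGroup_iff.mp (hA.1.eigenvectorUnitary).2
    have hQBu : QB * star QB = 1 := Matrix.mem_unitaryGroup_iff.mp (hB.1.eigenvectorUnitary).2
    have hVu : star V * V = 1 := Matrix.mem_unitaryGroup_iff'.mp (hC.1.eigenvectorUnitary).2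
    have hVdiag : star V * (S * A * S) * V = Matrix.diagonal (fun i => ((ν i : ℝ) : ℂ)) := by
      rw [← hco ν]; exact herm_star_mul_self_mul_eq_diagonal hC.1
    have hAspec : A = QA * Matrix.diagonal (fun i => ((eA i : ℝ) : ℂ)) * star QA := by
      rw [← hco eA]; exact herm_spectral hA.1
    have hBspec : B = QB * Matrix.diagonal (fun i => ((eB i : ℝ) : ℂ)) * star QB := by
      rw [← hco eB]; exact herm_spectral hB.1
    set f : Fin k → Fin n := fun j => p (Fin.castLE hk j) with hf
    have hfinj : Function.Injective f := fun a b hab =>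
      Fin.castLE_injective hk (p.injective hab)
    set U : Matrix (Fin n) (Fin k) ℂ := V.submatrix id f with hU
    have hU1 : Uᴴ * U = 1 := by
      calc Uᴴ * U = Uᴴ * (1 : Matrix (Fin n) (Fin n) ℂ) * U := by rw [Matrix.mul_one]
        _ = (Vᴴ * 1 * V).submatrix f f := conj_submatrix V 1 f
        _ = 1 := by
            rw [Matrix.mul_one, show Vᴴ * V = 1 from hVu]
            ext a b
            simp [Matrix.submatrix_apply, Matrix.one_apply, hfinj.eq_iff]
    have hUCU : Uᴴ * (S * A * S) * U = Matrix.diagonal (fun j => ((ν (f j) : ℝ) : ℂ)) := by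
      calc Uᴴ * (S * A * S) * U = (Vᴴ * (S * A * S) * V).submatrix f f :=
            conj_submatrix V _ f
        _ = (Matrix.diagonal (fun i => ((ν i : ℝ) : ℂ))).submatrix f f := by
            rw [show Vᴴ * (S * A * S) * V = _ from hVdiag]
        _ = Matrix.diagonal (fun j => ((ν (f j) : ℝ) : ℂ)) := by
            ext a b
            by_cases hab : a = b
            · simp [Matrix.submatrix_apply, Matrix.diagonal_apply, hab]
            · simp [Matrix.submatrix_apply, Matrix.diagonal_apply, hab,
                hfinj.ne_iff.mpr hab]
    set W2 : Matrix (Fin n) (Fin k) ℂ := star QA * (S * U) with hW2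
    have hW2H : W2ᴴ = (Uᴴ * S) * QA := by
      rw [hW2, Matrix.conjTranspose_mul, Matrix.conjTranspose_mul, hSH,
        Matrix.star_eq_conjTranspose, Matrix.conjTranspose_conjTranspose]
    have hW2diag : W2ᴴ * Matrix.diagonal (fun i => ((eA i : ℝ) : ℂ)) * W2
        = Matrix.diagonal (fun j => ((ν (f j) : ℝ) : ℂ)) := by
      calc W2ᴴ * Matrix.diagonal (fun i => ((eA i : ℝ) : ℂ)) * W2
          = ((Uᴴ * S) * QA) * Matrix.diagonal (fun i => ((eA i : ℝ) : ℂ))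
            * (star QA * (S * U)) := by rw [hW2H]
        _ = Uᴴ * (S * ((QA * Matrix.diagonal (fun i => ((eA i : ℝ) : ℂ)) * star QA)) * S) * U
            := by simp only [Matrix.mul_assoc]
        _ = Uᴴ * (S * A * S) * U := by rw [← hAspec]
        _ = Matrix.diagonal (fun j => ((ν (f j) : ℝ) : ℂ)) := hUCU
    have hW2W2 : W2ᴴ * Matrix.diagonal (fun i => (((fun _ : Fin n => (1:ℝ)) i : ℝ) : ℂ)) * W2
        = Uᴴ * B * U := by
      have hd1 : Matrix.diagonal (fun i => (((fun _ : Fin n => (1:ℝ)) i : ℝ) : ℂ))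
          = (1 : Matrix (Fin n) (Fin n) ℂ) := by
        rw [show (fun i => (((fun _ : Fin n => (1:ℝ)) i : ℝ) : ℂ)) = fun _ : Fin n => (1:ℂ)
          from by funext i; norm_num, Matrix.diagonal_one]
      rw [hd1, Matrix.mul_one, hW2H, hW2]
      calc ((Uᴴ * S) * QA) * (star QA * (S * U))
          = Uᴴ * (S * (QA * star QA) * S) * U := by simp only [Matrix.mul_assoc]
        _ = Uᴴ * (S * S) * U := by rw [hQAu, Matrix.mul_one]
        _ = Uᴴ * B * U := by rw [hSS]
    set W3 : Matrix (Fin n) (Fin k) ℂ := star QB * U with hW3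
    have hW3H : W3ᴴ = Uᴴ * QB := by
      rw [hW3, Matrix.conjTranspose_mul, Matrix.star_eq_conjTranspose,
        Matrix.conjTranspose_conjTranspose]
    have hW3diag : W3ᴴ * Matrix.diagonal (fun i => ((eB i : ℝ) : ℂ)) * W3 = Uᴴ * B * U := by
      calc W3ᴴ * Matrix.diagonal (fun i => ((eB i : ℝ) : ℂ)) * W3
          = Uᴴ * (QB * Matrix.diagonal (fun i => ((eB i : ℝ) : ℂ)) * star QB) * U := by
            rw [hW3H, hW3]; simp only [Matrix.mul_assoc]
        _ = Uᴴ * B * U := by rw [← hBspec]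
    have hW3W3 : W3ᴴ * Matrix.diagonal (fun i => (((fun _ : Fin n => (1:ℝ)) i : ℝ) : ℂ)) * W3
        = 1 := by
      have hd1 : Matrix.diagonal (fun i => (((fun _ : Fin n => (1:ℝ)) i : ℝ) : ℂ))
          = (1 : Matrix (Fin n) (Fin n) ℂ) := by
        rw [show (fun i => (((fun _ : Fin n => (1:ℝ)) i : ℝ) : ℂ)) = fun _ : Fin n => (1:ℂ)
          from by funext i; norm_num, Matrix.diagonal_one]
      rw [hd1, Matrix.mul_one, hW3H, hW3]
      calc (Uᴴ * QB) * (star QB * U) = Uᴴ * (QB * star QB) * U := by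
            simp only [Matrix.mul_assoc]
        _ = Uᴴ * U := by rw [hQBu, Matrix.mul_one]
        _ = 1 := hU1
    -- real sums via Cauchy-Binet
    set 𝒮 := (Finset.powersetCard k (Finset.univ : Finset (Fin n))).attach with h𝒮
    set nA : {x // x ∈ Finset.powersetCard k (Finset.univ : Finset (Fin n))} → ℝ :=
      fun S => Complex.normSq ((W2.submatrix (S.1.orderEmbOfFin
        (Finset.mem_powersetCard_univ.mp S.2)) id).det) with hnA
    set nB : {x // x ∈ Finset.powersetCard k (Finset.univ : Finset (Fin n))} → ℝ :=
      fun S => Complex.normSq ((W3.submatrix (S.1.orderEmbOfFin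
        (Finset.mem_powersetCard_univ.mp S.2)) id).det) with hnB
    have hsum1 : ∏ i ∈ Finset.univ.filter (fun i : Fin n => (i : ℕ) < k), ν (p i)
        = ∑ S ∈ 𝒮, (∏ i ∈ S.1, eA i) * nA S := by
      apply Complex.ofReal_injective
      push_cast
      calc ∏ i ∈ Finset.univ.filter (fun i : Fin n => (i : ℕ) < k), ((ν (p i) : ℝ) : ℂ)
          = ∏ j : Fin k, ((ν (f j) : ℝ) : ℂ) :=
            prod_filter_lt hk (fun i => ((ν (p i) : ℝ) : ℂ))
        _ = (Matrix.diagonal (fun j => ((ν (f j) : ℝ) : ℂ))).det := by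
            rw [Matrix.det_diagonal]
        _ = (W2ᴴ * Matrix.diagonal (fun i => ((eA i : ℝ) : ℂ)) * W2).det := by rw [hW2diag]
        _ = ∑ S ∈ 𝒮, ((∏ i ∈ S.1, eA i : ℝ) : ℂ) * ((nA S : ℝ) : ℂ) := cb_det W2 eA
        _ = ∑ x ∈ 𝒮, (∏ i ∈ x.1, ((eA i : ℝ) : ℂ)) * ((nA x : ℝ) : ℂ) := by
            push_cast; rfl
    have hsum2 : ∑ S ∈ 𝒮, nA S = ∑ S ∈ 𝒮, (∏ i ∈ S.1, eB i) * nB S := by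
      apply Complex.ofReal_injective
      push_cast
      calc ∑ S ∈ 𝒮, ((nA S : ℝ) : ℂ)
          = ∑ S ∈ 𝒮, ((∏ i ∈ S.1, ((fun _ : Fin n => (1:ℝ)) i) : ℝ) : ℂ) * ((nA S : ℝ) : ℂ) := by
            refine Finset.sum_congr rfl fun S _ => ?_
            rw [Finset.prod_const_one]
            norm_num
        _ = (W2ᴴ * Matrix.diagonal (fun i => (((fun _ : Fin n => (1:ℝ)) i : ℝ) : ℂ)) * W2).det
            := (cb_det W2 (fun _ => (1:ℝ))).symm
        _ = (W3ᴴ * Matrix.diagonal (fun i => ((eB i : ℝ) : ℂ)) * W3).det := by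
            rw [hW2W2, hW3diag]
        _ = ∑ S ∈ 𝒮, ((∏ i ∈ S.1, eB i : ℝ) : ℂ) * ((nB S : ℝ) : ℂ) := cb_det W3 eB
        _ = ∑ x ∈ 𝒮, (∏ i ∈ x.1, ((eB i : ℝ) : ℂ)) * ((nB x : ℝ) : ℂ) := by
            push_cast; rfl
    have hsum3 : ∑ S ∈ 𝒮, nB S = 1 := by
      apply Complex.ofReal_injective
      push_cast
      calc ∑ S ∈ 𝒮, ((nB S : ℝ) : ℂ)
          = ∑ S ∈ 𝒮, ((∏ i ∈ S.1, ((fun _ : Fin n => (1:ℝ)) i) : ℝ) : ℂ) * ((nB S : ℝ) : ℂ) := by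
            refine Finset.sum_congr rfl fun S _ => ?_
            rw [Finset.prod_const_one]
            norm_num
        _ = (W3ᴴ * Matrix.diagonal (fun i => (((fun _ : Fin n => (1:ℝ)) i : ℝ) : ℂ)) * W3).det
            := (cb_det W3 (fun _ => (1:ℝ))).symm
        _ = (1 : Matrix (Fin k) (Fin k) ℂ).det := by rw [hW3W3]
        _ = 1 := Matrix.det_one
    -- eigenvalue bounds
    have hα0 : ∀ i, 0 ≤ α i := fun i => by rw [hσA i]; exact hA.eigenvalues_nonneg _
    have hβ0 : ∀ i, 0 ≤ β i := fun i => by rw [hσB i]; exact hB.eigenvalues_nonneg _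
    have hboundA : ∀ S ∈ 𝒮, ∏ i ∈ S.1, eA i
        ≤ ∏ i ∈ Finset.univ.filter (fun i : Fin n => (i : ℕ) < k), α i := by
      intro S _
      have hcard : S.1.card = k := Finset.mem_powersetCard_univ.mp S.2
      have h1 : ∏ i ∈ S.1, eA i = ∏ j ∈ S.1.image σA.symm, α j := by
        rw [Finset.prod_image (fun x _ y _ h => σA.symm.injective h)]
        exact Finset.prod_congr rfl fun i _ => by
          rw [hσA (σA.symm i), Equiv.apply_symm_apply]
      rw [h1]
      exact prod_subset_le_topk hk α hαanti hα0 _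
        (by rw [Finset.card_image_of_injective _ σA.symm.injective, hcard])
    have hboundB : ∀ S ∈ 𝒮, ∏ i ∈ S.1, eB i
        ≤ ∏ i ∈ Finset.univ.filter (fun i : Fin n => (i : ℕ) < k), β i := by
      intro S _
      have hcard : S.1.card = k := Finset.mem_powersetCard_univ.mp S.2
      have h1 : ∏ i ∈ S.1, eB i = ∏ j ∈ S.1.image σB.symm, β j := by
        rw [Finset.prod_image (fun x _ y _ h => σB.symm.injective h)]
        exact Finset.prod_congr rfl fun i _ => by
          rw [hσB (σB.symm i), Equiv.apply_symm_apply]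
      rw [h1]
      exact prod_subset_le_topk hk β hβanti hβ0 _
        (by rw [Finset.card_image_of_injective _ σB.symm.injective, hcard])
    have hPα0 : 0 ≤ ∏ i ∈ Finset.univ.filter (fun i : Fin n => (i : ℕ) < k), α i :=
      Finset.prod_nonneg fun i _ => hα0 i
    calc ∏ i ∈ Finset.univ.filter (fun i : Fin n => (i : ℕ) < k), ν (p i)
        = ∑ S ∈ 𝒮, (∏ i ∈ S.1, eA i) * nA S := hsum1
      _ ≤ ∑ S ∈ 𝒮, (∏ i ∈ Finset.univ.filter (fun i : Fin n => (i : ℕ) < k), α i) * nA S :=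
          Finset.sum_le_sum fun S hS =>
            mul_le_mul_of_nonneg_right (hboundA S hS) (Complex.normSq_nonneg _)
      _ = (∏ i ∈ Finset.univ.filter (fun i : Fin n => (i : ℕ) < k), α i) * ∑ S ∈ 𝒮, nA S := by
          rw [Finset.mul_sum]
      _ = (∏ i ∈ Finset.univ.filter (fun i : Fin n => (i : ℕ) < k), α i)
            * ∑ S ∈ 𝒮, (∏ i ∈ S.1, eB i) * nB S := by rw [hsum2]
      _ ≤ (∏ i ∈ Finset.univ.filter (fun i : Fin n => (i : ℕ) < k), α i)
            * ∑ S ∈ 𝒮, (∏ i ∈ Finset.univ.filter (fun i : Fin n => (i : ℕ) < k), β i) * nB S :=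
          mul_le_mul_of_nonneg_left (Finset.sum_le_sum fun S hS =>
            mul_le_mul_of_nonneg_right (hboundB S hS) (Complex.normSq_nonneg _)) hPα0
      _ = (∏ i ∈ Finset.univ.filter (fun i : Fin n => (i : ℕ) < k), α i)
            * ((∏ i ∈ Finset.univ.filter (fun i : Fin n => (i : ℕ) < k), β i)
              * ∑ S ∈ 𝒮, nB S) := by
          congr 1
          exact (Finset.mul_sum _ _ _).symm
      _ = ∏ i ∈ Finset.univ.filter (fun i : Fin n => (i : ℕ) < k), (α i * β i) := by
          rw [hsum3, mul_one, Finset.prod_mul_distrib]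
  · -- determinant equality
    apply Complex.ofReal_injective
    push_cast
    calc ∏ i, ((ν (p i) : ℂ)) = ∏ i, (ν i : ℂ) := Equiv.prod_comp p (fun i => (ν i : ℂ))
      _ = (S * A * S).det := hC.1.det_eq_prod_eigenvalues.symm
      _ = A.det * B.det := by
          rw [Matrix.det_mul, Matrix.det_mul, ← hSS, Matrix.det_mul]; ring
      _ = (∏ i, (hA.1.eigenvalues i : ℂ)) * ∏ i, (hB.1.eigenvalues i : ℂ) := by
          rw [hA.1.det_eq_prod_eigenvalues, hB.1.det_eq_prod_eigenvalues]
          rfl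
      _ = (∏ i, (α i : ℂ)) * ∏ i, (β i : ℂ) := by
          rw [show ∏ i, (α i : ℂ) = ∏ i, (hA.1.eigenvalues (σA i) : ℂ) from
              Finset.prod_congr rfl fun i _ => by rw [hσA i],
            show ∏ i, (β i : ℂ) = ∏ i, (hB.1.eigenvalues (σB i) : ℂ) from
              Finset.prod_congr rfl fun i _ => by rw [hσB i],
            Equiv.prod_comp σA (fun i => (hA.1.eigenvalues i : ℂ)),
            Equiv.prod_comp σB (fun i => (hB.1.eigenvalues i : ℂ))]
      _ = ∏ i, ((α i : ℂ) * (β i : ℂ)) := (Finset.prod_mul_distrib).symm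
end

section
/- Let X, Y₀, Y₁,...,Y_N, Ŷ₁,...,Ŷ_N be jointly distributed random variables such that each Ŷₙ is conditionally independent of everything else given Yₙ. If I(Y_{1:N}; Ŷ_{1:N} | Y₀) ≤ R, then I(X; Y₀, Ŷ_{1:N}) ≤ I(X; Y₀) + R. -/
open Finset

/-- Distribution of a random variable `X` on a finite sample space with pmf `μ`. -/
noncomputable def pdist {Ω A : Type*} [Fintype Ω] [DecidableEq A]
    (μ : Ω → ℝ) (X : Ω → A) : A → ℝ :=
  fun a => ∑ ω, if X ω = a then μ ω else 0

/-- Shannon entropy of a random variable. -/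
noncomputable def entRV {Ω A : Type*} [Fintype Ω] [Fintype A] [DecidableEq A]
    (μ : Ω → ℝ) (X : Ω → A) : ℝ :=
  -∑ a, pdist μ X a * Real.log (pdist μ X a)

/-- Mutual information `I(X;Y)`. -/
noncomputable def mi {Ω A B : Type*} [Fintype Ω] [Fintype A] [Fintype B]
    [DecidableEq A] [DecidableEq B] (μ : Ω → ℝ) (X : Ω → A) (Y : Ω → B) : ℝ :=
  entRV μ X + entRV μ Y - entRV μ (fun ω => (X ω, Y ω))

/-- Conditional mutual information `I(X;Y|Z)`. -/
noncomputable def cmi {Ω A B C : Type*} [Fintype Ω] [Fintype A] [Fintype B] [Fintype C]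
    [DecidableEq A] [DecidableEq B] [DecidableEq C]
    (μ : Ω → ℝ) (X : Ω → A) (Y : Ω → B) (Z : Ω → C) : ℝ :=
  entRV μ (fun ω => (X ω, Z ω)) + entRV μ (fun ω => (Y ω, Z ω))
    - entRV μ (fun ω => (X ω, Y ω, Z ω)) - entRV μ Z


instance (priority := 2000) prodDecEq4 {A B C D : Type*}
    [DecidableEq A] [DecidableEq B] [DecidableEq C] [DecidableEq D] :
    DecidableEq (A × B × C × D) := instDecidableEqProd

set_option linter.unusedSectionVars false

section aux
variable {Ω : Type*} [Fintype Ω] {μ : Ω → ℝ}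

lemma pdist_nonneg {A : Type*} [DecidableEq A] (hμ : ∀ ω, 0 ≤ μ ω) (T : Ω → A) (a : A) :
    0 ≤ pdist μ T a :=
  Finset.sum_nonneg fun ω _ => by split <;> simp [hμ ω]

lemma pdist_mono {A B : Type*} [DecidableEq A] [DecidableEq B] (hμ : ∀ ω, 0 ≤ μ ω)
    {T : Ω → A} {U : Ω → B} {a : A} {b : B} (h : ∀ ω, T ω = a → U ω = b) :
    pdist μ T a ≤ pdist μ U b := by
  refine Finset.sum_le_sum fun ω _ => ?_
  by_cases hT : T ω = a
  · simp [hT, h ω hT]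
  · simp only [hT, if_false]
    split <;> simp [hμ ω]

lemma pdist_comp {A B : Type*} [DecidableEq A] [DecidableEq B]
    {g : A → B} (hg : Function.Injective g) (T : Ω → A) (a : A) :
    pdist μ (fun ω => g (T ω)) (g a) = pdist μ T a := by
  refine Finset.sum_congr rfl fun ω _ => ?_
  simp [hg.eq_iff]

lemma pdist_snd {A B : Type*} [Fintype A] [DecidableEq A] [DecidableEq B]
    (f : Ω → A) (g : Ω → B) (b : B) :
    ∑ a, pdist μ (fun ω => (f ω, g ω)) (a, b) = pdist μ g b := by
  unfold pdist
  rw [Finset.sum_comm]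
  refine Finset.sum_congr rfl fun ω _ => ?_
  simp only [Prod.mk.injEq, ite_and]
  by_cases hg : g ω = b
  · simp [hg]
  · simp [hg]

lemma entRV_comp {A B : Type*} [Fintype A] [Fintype B] [DecidableEq A] [DecidableEq B]
    {g : A → B} (hg : Function.Injective g) (T : Ω → A) :
    entRV μ (fun ω => g (T ω)) = entRV μ T := by
  unfold entRV
  congr 1
  set F : B → ℝ := fun b => pdist μ (fun ω => g (T ω)) b *
      Real.log (pdist μ (fun ω => g (T ω)) b) with hF
  have h2 : ∑ b, F b = ∑ b ∈ Finset.univ.image g, F b := by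
    refine (Finset.sum_subset (Finset.subset_univ _) ?_).symm
    intro b _ hb
    simp only [Finset.mem_image, Finset.mem_univ, true_and] at hb
    have h0 : pdist μ (fun ω => g (T ω)) b = 0 := by
      refine Finset.sum_eq_zero fun ω _ => ?_
      have : g (T ω) ≠ b := fun h => hb ⟨T ω, h⟩
      simp [this]
    simp [hF, h0]
  have h1 : ∑ b ∈ Finset.univ.image g, F b = ∑ a, F (g a) :=
    Finset.sum_image (fun a _ b _ hab => hg hab)
  rw [h2, h1]
  refine Finset.sum_congr rfl fun a _ => ?_
  simp [hF, pdist_comp hg]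

lemma pdist_mid {A B C : Type*} [Fintype B] [DecidableEq A] [DecidableEq B] [DecidableEq C]
    (f : Ω → A) (g : Ω → B) (h : Ω → C) (a : A) (c : C) :
    ∑ b, pdist μ (fun ω => (f ω, g ω, h ω)) (a, b, c) = pdist μ (fun ω => (f ω, h ω)) (a, c) := by
  unfold pdist
  rw [Finset.sum_comm]
  refine Finset.sum_congr rfl fun ω _ => ?_
  simp only [Prod.mk.injEq, ite_and]
  by_cases hf : f ω = a
  · by_cases hh : h ω = c
    · simp [hf, hh]
    · simp [hf, hh]
  · simp [hf]

variable {A B C : Type*} [Fintype A] [Fintype B] [Fintype C]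
  [DecidableEq A] [DecidableEq B] [DecidableEq C]
  (U : Ω → A) (V : Ω → B) (W : Ω → C)

lemma sum3_reorder1 (L : A → C → ℝ) :
    (∑ x, ∑ y, ∑ z, pdist μ (fun ω => (U ω, V ω, W ω)) (x, y, z) * L x z)
      = ∑ x, ∑ z, pdist μ (fun ω => (U ω, W ω)) (x, z) * L x z := by
  refine Finset.sum_congr rfl fun x _ => ?_
  rw [Finset.sum_comm]
  refine Finset.sum_congr rfl fun z _ => ?_
  rw [← Finset.sum_mul, pdist_mid]

lemma sum3_reorder2 (L : B → C → ℝ) :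
    (∑ x, ∑ y, ∑ z, pdist μ (fun ω => (U ω, V ω, W ω)) (x, y, z) * L y z)
      = ∑ y, ∑ z, pdist μ (fun ω => (V ω, W ω)) (y, z) * L y z := by
  rw [Finset.sum_comm]
  refine Finset.sum_congr rfl fun y _ => ?_
  rw [Finset.sum_comm]
  refine Finset.sum_congr rfl fun z _ => ?_
  rw [← Finset.sum_mul, pdist_snd U (fun ω => (V ω, W ω)) (y, z)]

lemma sum3_reorder3 (L : C → ℝ) :
    (∑ x, ∑ y, ∑ z, pdist μ (fun ω => (U ω, V ω, W ω)) (x, y, z) * L z)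
      = ∑ z, pdist μ W z * L z := by
  rw [sum3_reorder2 U V W (fun _ z => L z), Finset.sum_comm]
  refine Finset.sum_congr rfl fun z _ => ?_
  rw [← Finset.sum_mul, pdist_snd V W z]

lemma cmi_eq_sum :
    cmi μ U V W = ∑ x, ∑ y, ∑ z,
      pdist μ (fun ω => (U ω, V ω, W ω)) (x, y, z) *
        (Real.log (pdist μ (fun ω => (U ω, V ω, W ω)) (x, y, z))
          + Real.log (pdist μ W z)
          - Real.log (pdist μ (fun ω => (U ω, W ω)) (x, z))
          - Real.log (pdist μ (fun ω => (V ω, W ω)) (y, z))) := by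
  have expand : (∑ x, ∑ y, ∑ z,
      pdist μ (fun ω => (U ω, V ω, W ω)) (x, y, z) *
        (Real.log (pdist μ (fun ω => (U ω, V ω, W ω)) (x, y, z))
          + Real.log (pdist μ W z)
          - Real.log (pdist μ (fun ω => (U ω, W ω)) (x, z))
          - Real.log (pdist μ (fun ω => (V ω, W ω)) (y, z))))
      = (∑ x, ∑ y, ∑ z, pdist μ (fun ω => (U ω, V ω, W ω)) (x, y, z) *
            Real.log (pdist μ (fun ω => (U ω, V ω, W ω)) (x, y, z)))
        + (∑ x, ∑ y, ∑ z, pdist μ (fun ω => (U ω, V ω, W ω)) (x, y, z) *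
            Real.log (pdist μ W z))
        - (∑ x, ∑ y, ∑ z, pdist μ (fun ω => (U ω, V ω, W ω)) (x, y, z) *
            Real.log (pdist μ (fun ω => (U ω, W ω)) (x, z)))
        - (∑ x, ∑ y, ∑ z, pdist μ (fun ω => (U ω, V ω, W ω)) (x, y, z) *
            Real.log (pdist μ (fun ω => (V ω, W ω)) (y, z))) := by
    simp only [mul_add, mul_sub, Finset.sum_add_distrib, Finset.sum_sub_distrib]
  rw [expand,
    sum3_reorder3 U V W (fun z => Real.log (pdist μ W z)),
    sum3_reorder1 U V W (fun x z => Real.log (pdist μ (fun ω => (U ω, W ω)) (x, z))),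
    sum3_reorder2 U V W (fun y z => Real.log (pdist μ (fun ω => (V ω, W ω)) (y, z)))]
  unfold cmi entRV
  rw [Fintype.sum_prod_type (f := fun p : A × B × C =>
        pdist μ (fun ω => (U ω, V ω, W ω)) p * Real.log (pdist μ (fun ω => (U ω, V ω, W ω)) p)),
    Fintype.sum_prod_type (f := fun p : A × C =>
        pdist μ (fun ω => (U ω, W ω)) p * Real.log (pdist μ (fun ω => (U ω, W ω)) p)),
    Fintype.sum_prod_type (f := fun p : B × C =>
        pdist μ (fun ω => (V ω, W ω)) p * Real.log (pdist μ (fun ω => (V ω, W ω)) p))]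
  have : ∀ x, (∑ p : B × C, pdist μ (fun ω => (U ω, V ω, W ω)) (x, p) *
      Real.log (pdist μ (fun ω => (U ω, V ω, W ω)) (x, p)))
      = ∑ y, ∑ z, pdist μ (fun ω => (U ω, V ω, W ω)) (x, y, z) *
          Real.log (pdist μ (fun ω => (U ω, V ω, W ω)) (x, y, z)) := by
    intro x
    exact Fintype.sum_prod_type (f := fun p : B × C =>
      pdist μ (fun ω => (U ω, V ω, W ω)) (x, p) *
        Real.log (pdist μ (fun ω => (U ω, V ω, W ω)) (x, p)))
  simp only [this]
  ring

lemma triple_dominance (hμ : ∀ ω, 0 ≤ μ ω) (x : A) (y : B) (z : C) :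
    pdist μ (fun ω => (U ω, V ω, W ω)) (x, y, z) ≤ pdist μ (fun ω => (U ω, W ω)) (x, z)
    ∧ pdist μ (fun ω => (U ω, V ω, W ω)) (x, y, z) ≤ pdist μ (fun ω => (V ω, W ω)) (y, z)
    ∧ pdist μ (fun ω => (U ω, V ω, W ω)) (x, y, z) ≤ pdist μ W z := by
  refine ⟨pdist_mono hμ fun ω h => ?_, pdist_mono hμ fun ω h => ?_, pdist_mono hμ fun ω h => ?_⟩
  all_goals simp only [Prod.mk.injEq] at h ⊢ <;> tauto

lemma cmi_nonneg (hμ : ∀ ω, 0 ≤ μ ω) : 0 ≤ cmi μ U V W := by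
  rw [cmi_eq_sum]
  set p3 : A → B → C → ℝ := fun x y z => pdist μ (fun ω => (U ω, V ω, W ω)) (x, y, z) with hp3
  set pUW : A → C → ℝ := fun x z => pdist μ (fun ω => (U ω, W ω)) (x, z) with hpUW
  set pVW : B → C → ℝ := fun y z => pdist μ (fun ω => (V ω, W ω)) (y, z) with hpVW
  set pW : C → ℝ := fun z => pdist μ W z with hpW
  have hp3n : ∀ x y z, 0 ≤ p3 x y z := fun x y z => pdist_nonneg hμ _ _
  have hpUWn : ∀ x z, 0 ≤ pUW x z := fun x z => pdist_nonneg hμ _ _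
  have hpVWn : ∀ y z, 0 ≤ pVW y z := fun y z => pdist_nonneg hμ _ _
  have hpWn : ∀ z, 0 ≤ pW z := fun z => pdist_nonneg hμ _ _
  have key : ∀ x y z, p3 x y z - pUW x z * pVW y z / pW z ≤
      p3 x y z * (Real.log (p3 x y z) + Real.log (pW z)
        - Real.log (pUW x z) - Real.log (pVW y z)) := by
    intro x y z
    rcases eq_or_lt_of_le (hp3n x y z) with h0 | hpos
    · rw [← h0]
      have : 0 ≤ pUW x z * pVW y z / pW z :=
        div_nonneg (mul_nonneg (hpUWn x z) (hpVWn y z)) (hpWn z)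
      simp only [zero_mul, zero_sub]
      linarith
    · obtain ⟨d1, d2, d3⟩ := triple_dominance U V W hμ (μ := μ) x y z
      have h1 : 0 < pUW x z := lt_of_lt_of_le hpos d1
      have h2 : 0 < pVW y z := lt_of_lt_of_le hpos d2
      have h3 : 0 < pW z := lt_of_lt_of_le hpos d3
      set t : ℝ := pUW x z * pVW y z / (p3 x y z * pW z) with ht
      have htpos : 0 < t := div_pos (mul_pos h1 h2) (mul_pos hpos h3)
      have hlog : Real.log (p3 x y z) + Real.log (pW z)
          - Real.log (pUW x z) - Real.log (pVW y z) = -Real.log t := by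
        rw [ht, Real.log_div (by positivity) (by positivity),
          Real.log_mul (ne_of_gt h1) (ne_of_gt h2),
          Real.log_mul (ne_of_gt hpos) (ne_of_gt h3)]
        ring
      have hle : Real.log t ≤ t - 1 := Real.log_le_sub_one_of_pos htpos
      have hmul := mul_le_mul_of_nonneg_left hle (le_of_lt hpos)
      have hpt : p3 x y z * t = pUW x z * pVW y z / pW z := by
        rw [ht]
        field_simp
      rw [hlog]
      nlinarith [hmul, hpt]
  have step1 : (∑ x, ∑ y, ∑ z, (p3 x y z - pUW x z * pVW y z / pW z)) ≤
      ∑ x, ∑ y, ∑ z, p3 x y z * (Real.log (p3 x y z) + Real.log (pW z)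
        - Real.log (pUW x z) - Real.log (pVW y z)) := by
    refine Finset.sum_le_sum fun x _ => Finset.sum_le_sum fun y _ =>
      Finset.sum_le_sum fun z _ => key x y z
  refine le_trans ?_ step1
  have hsplit : (∑ x, ∑ y, ∑ z, (p3 x y z - pUW x z * pVW y z / pW z)) =
      (∑ x, ∑ y, ∑ z, p3 x y z) - ∑ x, ∑ y, ∑ z, pUW x z * pVW y z / pW z := by
    simp only [Finset.sum_sub_distrib]
  rw [hsplit]
  have hS3 : (∑ x, ∑ y, ∑ z, p3 x y z) = ∑ z, pW z := by
    have := sum3_reorder3 U V W (μ := μ) (fun _ => (1 : ℝ))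
    simpa using this
  have hQ : (∑ x, ∑ y, ∑ z, pUW x z * pVW y z / pW z) ≤ ∑ z, pW z := by
    have h1 : ∀ x z, (∑ y, pUW x z * pVW y z / pW z) = pUW x z / pW z * pW z := by
      intro x z
      calc (∑ y, pUW x z * pVW y z / pW z) = ∑ y, pUW x z / pW z * pVW y z := by
            refine Finset.sum_congr rfl fun y _ => by ring
        _ = pUW x z / pW z * ∑ y, pVW y z := by rw [Finset.mul_sum]
        _ = pUW x z / pW z * pW z := by rw [hpVW, hpW]; rw [pdist_snd V W z]
    have h2 : (∑ x, ∑ y, ∑ z, pUW x z * pVW y z / pW z)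
        = ∑ z, (∑ x, pUW x z) / pW z * pW z := by
      have e1 : ∀ x, (∑ y, ∑ z, pUW x z * pVW y z / pW z) = ∑ z, pUW x z / pW z * pW z := by
        intro x
        rw [Finset.sum_comm]
        exact Finset.sum_congr rfl fun z _ => h1 x z
      simp only [e1]
      rw [Finset.sum_comm]
      refine Finset.sum_congr rfl fun z _ => ?_
      rw [← Finset.sum_mul, ← Finset.sum_div]
    rw [h2]
    refine Finset.sum_le_sum fun z _ => ?_
    have hx : (∑ x, pUW x z) = pW z := by
      rw [hpUW, hpW]
      exact pdist_snd U W z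
    rw [hx]
    rcases eq_or_lt_of_le (hpWn z) with h0 | hp
    · rw [← h0]
      simp
    · rw [div_self (ne_of_gt hp), one_mul]
  linarith

lemma cmi_eq_zero (hμ : ∀ ω, 0 ≤ μ ω)
    (h : ∀ x y z, pdist μ (fun ω => (U ω, V ω, W ω)) (x, y, z) * pdist μ W z =
      pdist μ (fun ω => (U ω, W ω)) (x, z) * pdist μ (fun ω => (V ω, W ω)) (y, z)) :
    cmi μ U V W = 0 := by
  rw [cmi_eq_sum]
  refine Finset.sum_eq_zero fun x _ => Finset.sum_eq_zero fun y _ =>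
    Finset.sum_eq_zero fun z _ => ?_
  rcases eq_or_lt_of_le (pdist_nonneg hμ (fun ω => (U ω, V ω, W ω)) (x, y, z)) with h0 | hpos
  · rw [← h0, zero_mul]
  · obtain ⟨d1, d2, d3⟩ := triple_dominance U V W hμ (μ := μ) x y z
    have h1 : 0 < pdist μ (fun ω => (U ω, W ω)) (x, z) := lt_of_lt_of_le hpos d1
    have h2 : 0 < pdist μ (fun ω => (V ω, W ω)) (y, z) := lt_of_lt_of_le hpos d2
    have h3 : 0 < pdist μ W z := lt_of_lt_of_le hpos d3
    have hlog : Real.log (pdist μ (fun ω => (U ω, V ω, W ω)) (x, y, z)) + Real.log (pdist μ W z)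
        = Real.log (pdist μ (fun ω => (U ω, W ω)) (x, z))
          + Real.log (pdist μ (fun ω => (V ω, W ω)) (y, z)) := by
      rw [← Real.log_mul (ne_of_gt hpos) (ne_of_gt h3),
        ← Real.log_mul (ne_of_gt h1) (ne_of_gt h2), h x y z]
    rw [show Real.log (pdist μ (fun ω => (U ω, V ω, W ω)) (x, y, z)) + Real.log (pdist μ W z)
      - Real.log (pdist μ (fun ω => (U ω, W ω)) (x, z))
      - Real.log (pdist μ (fun ω => (V ω, W ω)) (y, z)) = 0 from by rw [sub_sub, hlog]; ring,
      mul_zero]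

end aux

section markov
variable {Ω A B C D : Type*} {N : ℕ}
  [Fintype Ω] [Fintype A] [Fintype B] [Fintype C] [Fintype D]
  [DecidableEq A] [DecidableEq B] [DecidableEq C] [DecidableEq D]
  (μ : Ω → ℝ) (X : Ω → A) (Y₀ : Ω → B) (Y : Fin N → Ω → C) (Yhat : Fin N → Ω → D)

noncomputable def Pj (S : Finset (Fin N)) (x : A) (y0 : B) (yv : Fin N → C)
    (c : Fin N → D) : ℝ :=
  pdist μ (fun ω => (X ω, Y₀ ω, (fun i => Y i ω), (fun i : {i // i ∈ S} => Yhat i.1 ω)))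
    (x, y0, yv, fun i => c i.1)

noncomputable def Pj' (S : Finset (Fin N)) (y0 : B) (yv : Fin N → C)
    (c : Fin N → D) : ℝ :=
  pdist μ (fun ω => (Y₀ ω, (fun i => Y i ω), (fun i : {i // i ∈ S} => Yhat i.1 ω)))
    (y0, yv, fun i => c i.1)

lemma Pj_marg {S : Finset (Fin N)} {n : Fin N} (hn : n ∈ S) (x : A) (y0 : B)
    (yv : Fin N → C) (c : Fin N → D) :
    ∑ d, Pj μ X Y₀ Y Yhat S x y0 yv (Function.update c n d)
      = Pj μ X Y₀ Y Yhat (S.erase n) x y0 yv c := by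
  unfold Pj pdist
  rw [Finset.sum_comm]
  refine Finset.sum_congr rfl fun ω _ => ?_
  have hiff : ∀ d : D,
      (((fun i : {i // i ∈ S} => Yhat i.1 ω) = fun i => Function.update c n d i.1)
        ↔ (Yhat n ω = d ∧
            ((fun i : {i // i ∈ S.erase n} => Yhat i.1 ω) = fun i => c i.1))) := by
    intro d
    constructor
    · intro h
      have h' := fun j => congrFun h j
      constructor
      · have := h' ⟨n, hn⟩
        simpa using this
      · funext i
        have hi : i.1 ∈ S := Finset.mem_of_mem_erase i.2
        have hne : i.1 ≠ n := Finset.ne_of_mem_erase i.2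
        have := h' ⟨i.1, hi⟩
        simpa [Function.update_of_ne hne] using this
    · rintro ⟨h1, h2⟩
      funext i
      by_cases hi : i.1 = n
      · simp only [hi, Function.update_self]
        exact h1
      · have := congrFun h2 ⟨i.1, Finset.mem_erase.mpr ⟨hi, i.2⟩⟩
        simpa [Function.update_of_ne hi] using this
  by_cases hQ : X ω = x ∧ Y₀ ω = y0 ∧ (fun i => Y i ω) = yv
  · simp only [Prod.mk.injEq, hQ.1, hQ.2.1, hQ.2.2, true_and]
    have hterm : ∀ d : D,
        (if ((fun i : {i // i ∈ S} => Yhat i.1 ω) = fun i => Function.update c n d i.1)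
          then μ ω else 0)
        = if Yhat n ω = d then
            (if ((fun i : {i // i ∈ S.erase n} => Yhat i.1 ω) = fun i => c i.1)
              then μ ω else 0) else 0 := by
      intro d
      rw [if_congr (hiff d) rfl rfl, ite_and]
    rw [Finset.sum_congr rfl fun d _ => hterm d, Finset.sum_ite_eq]
    simp
  · have hne : ∀ (E : Prop),
        ¬(X ω = x ∧ Y₀ ω = y0 ∧ (fun i => Y i ω) = yv ∧ E) :=
      fun E h => hQ ⟨h.1, h.2.1, h.2.2.1⟩
    simp only [Prod.mk.injEq]
    rw [if_neg (hne _), Finset.sum_eq_zero fun d _ => if_neg (hne _)]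

lemma Pj'_eq_sum (S : Finset (Fin N)) (y0 : B) (yv : Fin N → C) (c : Fin N → D) :
    Pj' μ Y₀ Y Yhat S y0 yv c = ∑ x, Pj μ X Y₀ Y Yhat S x y0 yv c :=
  (pdist_snd X (fun ω => (Y₀ ω, (fun i => Y i ω), (fun i : {i // i ∈ S} => Yhat i.1 ω)))
    (y0, yv, fun i => c i.1)).symm

lemma Pj_base
    (hM : ∀ (n : Fin N) (x : A) (y0 : B) (yv : Fin N → C) (cv : Fin N → D),
      pdist μ (fun ω => (X ω, Y₀ ω, fun i => Y i ω, fun i => Yhat i ω))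
          (x, y0, yv, cv) * pdist μ (Y n) (yv n) =
      pdist μ (fun ω => (X ω, Y₀ ω, fun i => Y i ω,
          fun i : {i : Fin N // i ≠ n} => Yhat i ω)) (x, y0, yv, fun i => cv i) *
        pdist μ (fun ω => (Y n ω, Yhat n ω)) (yv n, cv n))
    (n : Fin N) (x : A) (y0 : B) (yv : Fin N → C) (c : Fin N → D) :
    Pj μ X Y₀ Y Yhat Finset.univ x y0 yv c * pdist μ (Y n) (yv n)
      = Pj μ X Y₀ Y Yhat (Finset.univ.erase n) x y0 yv c *
          pdist μ (fun ω => (Y n ω, Yhat n ω)) (yv n, c n) := by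
  have hg1 : Function.Injective (fun q : A × B × (Fin N → C) × (Fin N → D) =>
      (q.1, q.2.1, q.2.2.1, fun i : {i : Fin N // i ∈ Finset.univ} => q.2.2.2 i.1)) := by
    rintro ⟨p1, p2, p3, p4⟩ ⟨q1, q2, q3, q4⟩ h
    simp only [Prod.mk.injEq] at h ⊢
    obtain ⟨h1, h2, h3, h4⟩ := h
    exact ⟨h1, h2, h3, funext fun j => congrFun h4 ⟨j, Finset.mem_univ j⟩⟩
  have e1 : Pj μ X Y₀ Y Yhat Finset.univ x y0 yv c
      = pdist μ (fun ω => (X ω, Y₀ ω, fun i => Y i ω, fun i => Yhat i ω))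
          (x, y0, yv, c) :=
    pdist_comp hg1
      (fun ω => (X ω, Y₀ ω, fun i => Y i ω, fun i => Yhat i ω)) (x, y0, yv, c)
  have hg2 : Function.Injective
      (fun q : A × B × (Fin N → C) × ({i : Fin N // i ∈ Finset.univ.erase n} → D) =>
        (q.1, q.2.1, q.2.2.1, fun j : {i : Fin N // i ≠ n} =>
          q.2.2.2 ⟨j.1, Finset.mem_erase.mpr ⟨j.2, Finset.mem_univ j.1⟩⟩)) := by
    rintro ⟨p1, p2, p3, p4⟩ ⟨q1, q2, q3, q4⟩ h
    simp only [Prod.mk.injEq] at h ⊢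
    obtain ⟨h1, h2, h3, h4⟩ := h
    refine ⟨h1, h2, h3, funext fun j => ?_⟩
    have hj : j.1 ≠ n := (Finset.mem_erase.mp j.2).1
    have := congrFun h4 ⟨j.1, hj⟩
    simpa using this
  have e2 : pdist μ (fun ω => (X ω, Y₀ ω, fun i => Y i ω,
        fun i : {i : Fin N // i ≠ n} => Yhat i ω)) (x, y0, yv, fun i => c i)
      = Pj μ X Y₀ Y Yhat (Finset.univ.erase n) x y0 yv c :=
    pdist_comp hg2
      (fun ω => (X ω, Y₀ ω, fun i => Y i ω,
        fun i : {i : Fin N // i ∈ Finset.univ.erase n} => Yhat i.1 ω))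
      (x, y0, yv, fun i => c i.1)
  rw [e1, hM n x y0 yv c, e2]

lemma Pj_chain (S : Finset (Fin N)) : ∀ {n : Fin N}, n ∉ S →
    ∀ (hM : ∀ (n : Fin N) (x : A) (y0 : B) (yv : Fin N → C) (cv : Fin N → D),
      pdist μ (fun ω => (X ω, Y₀ ω, fun i => Y i ω, fun i => Yhat i ω))
          (x, y0, yv, cv) * pdist μ (Y n) (yv n) =
      pdist μ (fun ω => (X ω, Y₀ ω, fun i => Y i ω,
          fun i : {i : Fin N // i ≠ n} => Yhat i ω)) (x, y0, yv, fun i => cv i) *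
        pdist μ (fun ω => (Y n ω, Yhat n ω)) (yv n, cv n))
    (x : A) (y0 : B) (yv : Fin N → C) (c : Fin N → D),
    Pj μ X Y₀ Y Yhat Sᶜ x y0 yv c * pdist μ (Y n) (yv n)
      = Pj μ X Y₀ Y Yhat (Sᶜ.erase n) x y0 yv c *
          pdist μ (fun ω => (Y n ω, Yhat n ω)) (yv n, c n) := by
  induction S using Finset.induction_on with
  | empty =>
      intro n _ hM x y0 yv c
      simpa using Pj_base μ X Y₀ Y Yhat hM n x y0 yv c
  | @insert m S hm ih =>
      intro n hn hM x y0 yv c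
      have hnm : n ≠ m := fun h => hn (h ▸ Finset.mem_insert_self m S)
      have hnS : n ∉ S := fun h => hn (Finset.mem_insert_of_mem h)
      have hmc : m ∈ Sᶜ := Finset.mem_compl.mpr hm
      have hmc' : m ∈ Sᶜ.erase n := Finset.mem_erase.mpr ⟨fun h => hnm h.symm, hmc⟩
      calc Pj μ X Y₀ Y Yhat (insert m S)ᶜ x y0 yv c * pdist μ (Y n) (yv n)
          = Pj μ X Y₀ Y Yhat (Sᶜ.erase m) x y0 yv c * pdist μ (Y n) (yv n) := by
            rw [Finset.compl_insert]
        _ = (∑ d, Pj μ X Y₀ Y Yhat Sᶜ x y0 yv (Function.update c m d)) *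
              pdist μ (Y n) (yv n) := by
            rw [Pj_marg μ X Y₀ Y Yhat hmc]
        _ = ∑ d, Pj μ X Y₀ Y Yhat Sᶜ x y0 yv (Function.update c m d) *
              pdist μ (Y n) (yv n) := by rw [Finset.sum_mul]
        _ = ∑ d, Pj μ X Y₀ Y Yhat (Sᶜ.erase n) x y0 yv (Function.update c m d) *
              pdist μ (fun ω => (Y n ω, Yhat n ω)) (yv n, c n) := by
            refine Finset.sum_congr rfl fun d _ => ?_
            rw [ih hnS hM x y0 yv (Function.update c m d),
              Function.update_of_ne hnm]
        _ = (∑ d, Pj μ X Y₀ Y Yhat (Sᶜ.erase n) x y0 yv (Function.update c m d)) *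
              pdist μ (fun ω => (Y n ω, Yhat n ω)) (yv n, c n) := by
            rw [Finset.sum_mul]
        _ = Pj μ X Y₀ Y Yhat ((Sᶜ.erase n).erase m) x y0 yv c *
              pdist μ (fun ω => (Y n ω, Yhat n ω)) (yv n, c n) := by
            rw [Pj_marg μ X Y₀ Y Yhat hmc']
        _ = Pj μ X Y₀ Y Yhat ((insert m S)ᶜ.erase n) x y0 yv c *
              pdist μ (fun ω => (Y n ω, Yhat n ω)) (yv n, c n) := by
            rw [Finset.compl_insert, Finset.erase_right_comm]

variable (hM : ∀ (n : Fin N) (x : A) (y0 : B) (yv : Fin N → C) (cv : Fin N → D),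
      pdist μ (fun ω => (X ω, Y₀ ω, fun i => Y i ω, fun i => Yhat i ω))
          (x, y0, yv, cv) * pdist μ (Y n) (yv n) =
      pdist μ (fun ω => (X ω, Y₀ ω, fun i => Y i ω,
          fun i : {i : Fin N // i ≠ n} => Yhat i ω)) (x, y0, yv, fun i => cv i) *
        pdist μ (fun ω => (Y n ω, Yhat n ω)) (yv n, cv n))

lemma Pj_le (hμ : ∀ ω, 0 ≤ μ ω) (S : Finset (Fin N)) (n : Fin N)
    (x : A) (y0 : B) (yv : Fin N → C) (c : Fin N → D) :
    Pj μ X Y₀ Y Yhat S x y0 yv c ≤ pdist μ (Y n) (yv n) := by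
  refine pdist_mono hμ fun ω h => ?_
  simp only [Prod.mk.injEq] at h
  exact congrFun h.2.2.1 n

lemma Pj'_le (hμ : ∀ ω, 0 ≤ μ ω) (S : Finset (Fin N)) (n : Fin N)
    (y0 : B) (yv : Fin N → C) (c : Fin N → D) :
    Pj' μ Y₀ Y Yhat S y0 yv c ≤ pdist μ (Y n) (yv n) := by
  refine pdist_mono hμ fun ω h => ?_
  simp only [Prod.mk.injEq] at h
  exact congrFun h.2.1 n

include hM X

lemma Pj_chain' {U : Finset (Fin N)} {n : Fin N} (hn : n ∈ U)
    (x : A) (y0 : B) (yv : Fin N → C) (c : Fin N → D) :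
    Pj μ X Y₀ Y Yhat U x y0 yv c * pdist μ (Y n) (yv n)
      = Pj μ X Y₀ Y Yhat (U.erase n) x y0 yv c *
          pdist μ (fun ω => (Y n ω, Yhat n ω)) (yv n, c n) := by
  have hnc : n ∉ Uᶜ := fun h => (Finset.mem_compl.mp h) hn
  have := Pj_chain μ X Y₀ Y Yhat Uᶜ hnc hM x y0 yv c
  simpa [compl_compl] using this

lemma Pj_prod (S : Finset (Fin N)) (x : A) (y0 : B) (yv : Fin N → C) (c : Fin N → D) :
    Pj μ X Y₀ Y Yhat S x y0 yv c * ∏ n ∈ S, pdist μ (Y n) (yv n)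
      = Pj μ X Y₀ Y Yhat ∅ x y0 yv c *
          ∏ n ∈ S, pdist μ (fun ω => (Y n ω, Yhat n ω)) (yv n, c n) := by
  induction S using Finset.induction_on with
  | empty => simp
  | @insert m S hm ih =>
      rw [Finset.prod_insert hm, Finset.prod_insert hm]
      calc Pj μ X Y₀ Y Yhat (insert m S) x y0 yv c *
            (pdist μ (Y m) (yv m) * ∏ n ∈ S, pdist μ (Y n) (yv n))
          = (Pj μ X Y₀ Y Yhat (insert m S) x y0 yv c * pdist μ (Y m) (yv m)) *
              ∏ n ∈ S, pdist μ (Y n) (yv n) := by ring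
        _ = (Pj μ X Y₀ Y Yhat S x y0 yv c *
              pdist μ (fun ω => (Y m ω, Yhat m ω)) (yv m, c m)) *
              ∏ n ∈ S, pdist μ (Y n) (yv n) := by
            rw [Pj_chain' μ X Y₀ Y Yhat hM (Finset.mem_insert_self m S) x y0 yv c,
              Finset.erase_insert hm]
        _ = (Pj μ X Y₀ Y Yhat S x y0 yv c * ∏ n ∈ S, pdist μ (Y n) (yv n)) *
              pdist μ (fun ω => (Y m ω, Yhat m ω)) (yv m, c m) := by ring
        _ = (Pj μ X Y₀ Y Yhat ∅ x y0 yv c *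
              ∏ n ∈ S, pdist μ (fun ω => (Y n ω, Yhat n ω)) (yv n, c n)) *
              pdist μ (fun ω => (Y m ω, Yhat m ω)) (yv m, c m) := by rw [ih]
        _ = Pj μ X Y₀ Y Yhat ∅ x y0 yv c *
              (pdist μ (fun ω => (Y m ω, Yhat m ω)) (yv m, c m) *
                ∏ n ∈ S, pdist μ (fun ω => (Y n ω, Yhat n ω)) (yv n, c n)) := by ring

lemma Pj'_prod (S : Finset (Fin N)) (y0 : B) (yv : Fin N → C) (c : Fin N → D) :
    Pj' μ Y₀ Y Yhat S y0 yv c * ∏ n ∈ S, pdist μ (Y n) (yv n)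
      = Pj' μ Y₀ Y Yhat ∅ y0 yv c *
          ∏ n ∈ S, pdist μ (fun ω => (Y n ω, Yhat n ω)) (yv n, c n) := by
  rw [Pj'_eq_sum μ X Y₀ Y Yhat, Pj'_eq_sum μ X Y₀ Y Yhat, Finset.sum_mul, Finset.sum_mul]
  exact Finset.sum_congr rfl fun x _ => Pj_prod μ X Y₀ Y Yhat hM S x y0 yv c

lemma Pj_factor (hμ : ∀ ω, 0 ≤ μ ω) (x : A) (y0 : B) (yv : Fin N → C) (c : Fin N → D) :
    Pj μ X Y₀ Y Yhat Finset.univ x y0 yv c * Pj' μ Y₀ Y Yhat ∅ y0 yv c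
      = Pj μ X Y₀ Y Yhat ∅ x y0 yv c * Pj' μ Y₀ Y Yhat Finset.univ y0 yv c := by
  set K : ℝ := ∏ n, pdist μ (Y n) (yv n) with hK
  have h1 := Pj_prod μ X Y₀ Y Yhat hM Finset.univ x y0 yv c
  have h2 := Pj'_prod μ X Y₀ Y Yhat hM Finset.univ y0 yv c
  rcases eq_or_ne K 0 with h0 | hne
  · obtain ⟨n, -, hn⟩ := Finset.prod_eq_zero_iff.mp (hK ▸ h0)
    have e1 : Pj μ X Y₀ Y Yhat Finset.univ x y0 yv c = 0 :=
      le_antisymm (hn ▸ Pj_le μ X Y₀ Y Yhat hμ Finset.univ n x y0 yv c)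
        (pdist_nonneg hμ _ _)
    have e2 : Pj' μ Y₀ Y Yhat Finset.univ y0 yv c = 0 :=
      le_antisymm (hn ▸ Pj'_le μ Y₀ Y Yhat hμ Finset.univ n y0 yv c)
        (pdist_nonneg hμ _ _)
    rw [e1, e2, zero_mul, mul_zero]
  · have key : (Pj μ X Y₀ Y Yhat Finset.univ x y0 yv c * Pj' μ Y₀ Y Yhat ∅ y0 yv c) * K
        = (Pj μ X Y₀ Y Yhat ∅ x y0 yv c * Pj' μ Y₀ Y Yhat Finset.univ y0 yv c) * K := by
      calc (Pj μ X Y₀ Y Yhat Finset.univ x y0 yv c * Pj' μ Y₀ Y Yhat ∅ y0 yv c) * K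
          = (Pj μ X Y₀ Y Yhat Finset.univ x y0 yv c * K) * Pj' μ Y₀ Y Yhat ∅ y0 yv c := by
            ring
        _ = (Pj μ X Y₀ Y Yhat ∅ x y0 yv c *
              ∏ n, pdist μ (fun ω => (Y n ω, Yhat n ω)) (yv n, c n)) *
              Pj' μ Y₀ Y Yhat ∅ y0 yv c := by rw [← h1]
        _ = (Pj' μ Y₀ Y Yhat ∅ y0 yv c *
              ∏ n, pdist μ (fun ω => (Y n ω, Yhat n ω)) (yv n, c n)) *
              Pj μ X Y₀ Y Yhat ∅ x y0 yv c := by ring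
        _ = (Pj' μ Y₀ Y Yhat Finset.univ y0 yv c * K) *
              Pj μ X Y₀ Y Yhat ∅ x y0 yv c := by rw [← h2]
        _ = (Pj μ X Y₀ Y Yhat ∅ x y0 yv c * Pj' μ Y₀ Y Yhat Finset.univ y0 yv c) * K := by
            ring
    exact mul_right_cancel₀ hne key

end markov

/-- Upper Bound 2: if each `Ŷₙ` is conditionally independent of everything else
given `Yₙ`, and `I(Y_{1:N}; Ŷ_{1:N} | Y₀) ≤ R`, then
`I(X; Y₀, Ŷ_{1:N}) ≤ I(X; Y₀) + R`. -/
theorem mi_le_mi_add_backhaul {Ω A B C D : Type*} {N : ℕ}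
    [Fintype Ω] [Fintype A] [Fintype B] [Fintype C] [Fintype D]
    [DecidableEq A] [DecidableEq B] [DecidableEq C] [DecidableEq D]
    (μ : Ω → ℝ) (hμ : ∀ ω, 0 ≤ μ ω) (hμsum : ∑ ω, μ ω = 1)
    (X : Ω → A) (Y₀ : Ω → B) (Y : Fin N → Ω → C) (Yhat : Fin N → Ω → D)
    (hMarkov : ∀ (n : Fin N) (x : A) (y0 : B) (yv : Fin N → C) (cv : Fin N → D),
      pdist μ (fun ω => (X ω, Y₀ ω, fun i => Y i ω, fun i => Yhat i ω))
          (x, y0, yv, cv) * pdist μ (Y n) (yv n) =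
      pdist μ (fun ω => (X ω, Y₀ ω, fun i => Y i ω,
          fun i : {i : Fin N // i ≠ n} => Yhat i ω)) (x, y0, yv, fun i => cv i) *
        pdist μ (fun ω => (Y n ω, Yhat n ω)) (yv n, cv n))
    (R : ℝ)
    (hR : cmi μ (fun ω => fun i => Y i ω) (fun ω => fun i => Yhat i ω) Y₀ ≤ R) :
    mi μ X (fun ω => (Y₀ ω, fun i => Yhat i ω)) ≤ mi μ X Y₀ + R := by
  have hμne : ∀ ω, 0 ≤ μ ω := hμ
  -- Step F1 : chain rule for mutual information
  have e1 : entRV μ (fun ω => (Y₀ ω, fun i => Yhat i ω))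
      = entRV μ (fun ω => ((fun i => Yhat i ω), Y₀ ω)) := by
    have hg : Function.Injective (fun p : (Fin N → D) × B => (p.2, p.1)) := by
      rintro ⟨a1, a2⟩ ⟨b1, b2⟩ h
      simp only [Prod.mk.injEq] at h ⊢
      tauto
    exact (entRV_comp hg (fun ω => ((fun i => Yhat i ω), Y₀ ω)))
  have e2 : entRV μ (fun ω => (X ω, (fun i => Yhat i ω), Y₀ ω))
      = entRV μ (fun ω => (X ω, Y₀ ω, fun i => Yhat i ω)) := by
    have hg : Function.Injective (fun p : A × B × (Fin N → D) => (p.1, p.2.2, p.2.1)) := by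
      rintro ⟨a1, a2, a3⟩ ⟨b1, b2, b3⟩ h
      simp only [Prod.mk.injEq] at h ⊢
      tauto
    exact entRV_comp hg (fun ω => (X ω, Y₀ ω, fun i => Yhat i ω))
  have F1 : mi μ X (fun ω => (Y₀ ω, fun i => Yhat i ω))
      = mi μ X Y₀ + cmi μ X (fun ω => fun i => Yhat i ω) Y₀ := by
    simp only [mi, cmi]
    linarith [e1, e2]
  -- Step F2 : chain rule symmetry for conditional mutual information
  have a1 : entRV μ (fun ω => ((fun i => Y i ω), X ω, Y₀ ω))
      = entRV μ (fun ω => (X ω, (fun i => Y i ω), Y₀ ω)) := by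
    have hg : Function.Injective
        (fun p : A × (Fin N → C) × B => (p.2.1, p.1, p.2.2)) := by
      rintro ⟨a1, a2, a3⟩ ⟨b1, b2, b3⟩ h
      simp only [Prod.mk.injEq] at h ⊢
      tauto
    exact entRV_comp hg (fun ω => (X ω, (fun i => Y i ω), Y₀ ω))
  have a2 : entRV μ (fun ω => ((fun i => Yhat i ω), X ω, Y₀ ω))
      = entRV μ (fun ω => (X ω, (fun i => Yhat i ω), Y₀ ω)) := by
    have hg : Function.Injective
        (fun p : A × (Fin N → D) × B => (p.2.1, p.1, p.2.2)) := by
      rintro ⟨a1, a2, a3⟩ ⟨b1, b2, b3⟩ h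
      simp only [Prod.mk.injEq] at h ⊢
      tauto
    exact entRV_comp hg (fun ω => (X ω, (fun i => Yhat i ω), Y₀ ω))
  have a3 : entRV μ (fun ω => ((fun i => Y i ω), (fun i => Yhat i ω), X ω, Y₀ ω))
      = entRV μ (fun ω => (X ω, (fun i => Yhat i ω), (fun i => Y i ω), Y₀ ω)) := by
    have hg : Function.Injective
        (fun p : A × (Fin N → D) × (Fin N → C) × B =>
          (p.2.2.1, p.2.1, p.1, p.2.2.2)) := by
      rintro ⟨a1, a2, a3, a4⟩ ⟨b1, b2, b3, b4⟩ h
      simp only [Prod.mk.injEq] at h ⊢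
      tauto
    exact entRV_comp hg (fun ω => (X ω, (fun i => Yhat i ω), (fun i => Y i ω), Y₀ ω))
  have a4 : entRV μ (fun ω => ((fun i => Yhat i ω), (fun i => Y i ω), Y₀ ω))
      = entRV μ (fun ω => ((fun i => Y i ω), (fun i => Yhat i ω), Y₀ ω)) := by
    have hg : Function.Injective
        (fun p : (Fin N → C) × (Fin N → D) × B => (p.2.1, p.1, p.2.2)) := by
      rintro ⟨a1, a2, a3⟩ ⟨b1, b2, b3⟩ h
      simp only [Prod.mk.injEq] at h ⊢
      tauto
    exact entRV_comp hg (fun ω => ((fun i => Y i ω), (fun i => Yhat i ω), Y₀ ω))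
  have F2 : cmi μ X (fun ω => fun i => Yhat i ω) Y₀
        + cmi μ (fun ω => fun i => Y i ω) (fun ω => fun i => Yhat i ω)
            (fun ω => (X ω, Y₀ ω))
      = cmi μ (fun ω => fun i => Y i ω) (fun ω => fun i => Yhat i ω) Y₀
        + cmi μ X (fun ω => fun i => Yhat i ω)
            (fun ω => ((fun i => Y i ω), Y₀ ω)) := by
    simp only [cmi]
    linarith [a1, a2, a3, a4]
  -- Step F3 : Markov property kills the extra conditional mutual information
  have F3 : cmi μ X (fun ω => fun i => Yhat i ω)
      (fun ω => ((fun i => Y i ω), Y₀ ω)) = 0 := by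
    refine cmi_eq_zero X (fun ω => fun i => Yhat i ω)
      (fun ω => ((fun i => Y i ω), Y₀ ω)) hμ ?_
    intro x c z
    obtain ⟨yv, y0⟩ := z
    have r1 : pdist μ (fun ω => (X ω, (fun i => Yhat i ω), (fun i => Y i ω), Y₀ ω))
        (x, c, (yv, y0)) = Pj μ X Y₀ Y Yhat Finset.univ x y0 yv c := by
      have hg : Function.Injective
          (fun q : A × B × (Fin N → C) × ({i : Fin N // i ∈ (Finset.univ : Finset (Fin N))} → D) =>
            (q.1, fun i : Fin N => q.2.2.2 ⟨i, Finset.mem_univ i⟩, (q.2.2.1, q.2.1))) := by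
        rintro ⟨p1, p2, p3, p4⟩ ⟨q1, q2, q3, q4⟩ h
        simp only [Prod.mk.injEq] at h ⊢
        obtain ⟨h1, h2, h3, h4⟩ := h
        exact ⟨h1, h4, h3, funext fun j => by
          have := congrFun h2 j.1
          simpa using this⟩
      exact pdist_comp hg
        (fun ω => (X ω, Y₀ ω, (fun i => Y i ω),
          (fun i : {i : Fin N // i ∈ (Finset.univ : Finset (Fin N))} => Yhat i.1 ω)))
        (x, y0, yv, fun i => c i.1)
    have r2 : pdist μ (fun ω => ((fun i => Y i ω), Y₀ ω)) (yv, y0)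
        = Pj' μ Y₀ Y Yhat ∅ y0 yv c := by
      have hg : Function.Injective
          (fun q : B × (Fin N → C) × ({i : Fin N // i ∈ (∅ : Finset (Fin N))} → D) =>
            (q.2.1, q.1)) := by
        rintro ⟨p1, p2, p3⟩ ⟨q1, q2, q3⟩ h
        simp only [Prod.mk.injEq] at h ⊢
        refine ⟨h.2, h.1, funext fun i => (Finset.notMem_empty i.1 i.2).elim⟩
      exact pdist_comp hg
        (fun ω => (Y₀ ω, (fun i => Y i ω),
          (fun i : {i : Fin N // i ∈ (∅ : Finset (Fin N))} => Yhat i.1 ω)))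
        (y0, yv, fun i => c i.1)
    have r3 : pdist μ (fun ω => (X ω, (fun i => Y i ω), Y₀ ω)) (x, (yv, y0))
        = Pj μ X Y₀ Y Yhat ∅ x y0 yv c := by
      have hg : Function.Injective
          (fun q : A × B × (Fin N → C) × ({i : Fin N // i ∈ (∅ : Finset (Fin N))} → D) =>
            (q.1, (q.2.2.1, q.2.1))) := by
        rintro ⟨p1, p2, p3, p4⟩ ⟨q1, q2, q3, q4⟩ h
        simp only [Prod.mk.injEq] at h ⊢
        refine ⟨h.1, h.2.2, h.2.1, funext fun i => (Finset.notMem_empty i.1 i.2).elim⟩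
      exact pdist_comp hg
        (fun ω => (X ω, Y₀ ω, (fun i => Y i ω),
          (fun i : {i : Fin N // i ∈ (∅ : Finset (Fin N))} => Yhat i.1 ω)))
        (x, y0, yv, fun i => c i.1)
    have r4 : pdist μ (fun ω => ((fun i => Yhat i ω), (fun i => Y i ω), Y₀ ω))
        (c, (yv, y0)) = Pj' μ Y₀ Y Yhat Finset.univ y0 yv c := by
      have hg : Function.Injective
          (fun q : B × (Fin N → C) × ({i : Fin N // i ∈ (Finset.univ : Finset (Fin N))} → D) =>
            ((fun i : Fin N => q.2.2 ⟨i, Finset.mem_univ i⟩), (q.2.1, q.1))) := by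
        rintro ⟨p1, p2, p3⟩ ⟨q1, q2, q3⟩ h
        simp only [Prod.mk.injEq] at h ⊢
        obtain ⟨h1, h2, h3⟩ := h
        exact ⟨h3, h2, funext fun j => by
          have := congrFun h1 j.1
          simpa using this⟩
      exact pdist_comp hg
        (fun ω => (Y₀ ω, (fun i => Y i ω),
          (fun i : {i : Fin N // i ∈ (Finset.univ : Finset (Fin N))} => Yhat i.1 ω)))
        (y0, yv, fun i => c i.1)
    calc pdist μ (fun ω => (X ω, (fun i => Yhat i ω), (fun i => Y i ω), Y₀ ω))
          (x, c, (yv, y0)) * pdist μ (fun ω => ((fun i => Y i ω), Y₀ ω)) (yv, y0)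
        = Pj μ X Y₀ Y Yhat Finset.univ x y0 yv c * Pj' μ Y₀ Y Yhat ∅ y0 yv c := by
          rw [r1, r2]
      _ = Pj μ X Y₀ Y Yhat ∅ x y0 yv c * Pj' μ Y₀ Y Yhat Finset.univ y0 yv c :=
          Pj_factor μ X Y₀ Y Yhat hMarkov hμ x y0 yv c
      _ = pdist μ (fun ω => (X ω, (fun i => Y i ω), Y₀ ω)) (x, (yv, y0)) *
            pdist μ (fun ω => ((fun i => Yhat i ω), (fun i => Y i ω), Y₀ ω))
              (c, (yv, y0)) := by rw [r3, r4]
  -- Step F4 : nonnegativity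
  have F4 : 0 ≤ cmi μ (fun ω => fun i => Y i ω) (fun ω => fun i => Yhat i ω)
      (fun ω => (X ω, Y₀ ω)) :=
    cmi_nonneg (fun ω => fun i => Y i ω) (fun ω => fun i => Yhat i ω)
      (fun ω => (X ω, Y₀ ω)) hμ
  linarith [F1, F2, F3, F4, hR]
end

section
/- Under the conditional-independence Markov structure where each Ŷₙ depends only on Yₙ, the chain-rule sum of successive Wyner-Ziv rates telescopes: for any permutation π of {1,...,N}, Σₙ I(Y_{π(n)}; Ŷ_{π(n)} | Y₀, Ŷ_{π(1:n-1)}) = I(Y_{1:N}; Ŷ_{1:N} | Y₀). -/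
open Finset

section Tools
variable {Ω : Type*} [Fintype Ω] {μ : Ω → ℝ}

lemma pdist_congr {A A' : Type*} [DecidableEq A] [DecidableEq A']
    {X : Ω → A} {X' : Ω → A'} {a : A} {a' : A'}
    (h : ∀ ω, X ω = a ↔ X' ω = a') :
    pdist μ X a = pdist μ X' a' := by
  unfold pdist
  refine Finset.sum_congr rfl fun ω _ => ?_
  by_cases hx : X ω = a
  · rw [if_pos hx, if_pos ((h ω).mp hx)]
  · rw [if_neg hx, if_neg (fun hc => hx ((h ω).mpr hc))]

lemma pdist_expect {A : Type*} [Fintype A] [DecidableEq A]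
    (X : Ω → A) (f : A → ℝ) :
    ∑ a, pdist μ X a * f a = ∑ ω, μ ω * f (X ω) := by
  unfold pdist
  simp only [Finset.sum_mul, ite_mul, zero_mul]
  rw [Finset.sum_comm]
  refine Finset.sum_congr rfl fun ω _ => ?_
  rw [Finset.sum_ite_eq (Finset.univ) (X ω) (fun a => μ ω * f a)]
  simp

lemma entRV_eq {A : Type*} [Fintype A] [DecidableEq A] (X : Ω → A) :
    entRV μ X = -∑ ω, μ ω * Real.log (pdist μ X (X ω)) := by
  unfold entRV
  rw [pdist_expect X (fun a => Real.log (pdist μ X a))]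

lemma entRV_congr {A A' : Type*} [Fintype A] [Fintype A'] [DecidableEq A] [DecidableEq A']
    {X : Ω → A} {X' : Ω → A'} (f : A → A') (g : A' → A)
    (hf : ∀ ω, X' ω = f (X ω)) (hg : ∀ ω, X ω = g (X' ω)) :
    entRV μ X = entRV μ X' := by
  rw [entRV_eq, entRV_eq]
  congr 1
  refine Finset.sum_congr rfl fun ω _ => ?_
  congr 1
  refine congrArg Real.log (pdist_congr fun ω' => ⟨fun h => ?_, fun h => ?_⟩)
  · rw [hf ω', h, ← hf ω]
  · rw [hg ω', h, ← hg ω]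

lemma pdist_apply_le (hμ : ∀ ω, 0 ≤ μ ω) {A : Type*} [DecidableEq A]
    (X : Ω → A) (ω₀ : Ω) : μ ω₀ ≤ pdist μ X (X ω₀) := by
  unfold pdist
  have := Finset.single_le_sum (f := fun ω => if X ω = X ω₀ then μ ω else 0)
    (fun i _ => by split_ifs; exacts [hμ i, le_rfl]) (Finset.mem_univ ω₀)
  simpa using this

lemma pdist_comp_s10 {E E' Dd : Type*} [Fintype E] [DecidableEq E] [DecidableEq E'] [DecidableEq Dd]
    (F : Ω → E) (U : Ω → Dd) (φ : E → E') (w : E') (u : Dd) :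
    pdist μ (fun ω => (φ (F ω), U ω)) (w, u)
      = ∑ e, if φ e = w then pdist μ (fun ω => (F ω, U ω)) (e, u) else 0 := by
  unfold pdist
  have h1 : ∀ e : E, (if φ e = w then ∑ ω, (if (F ω, U ω) = (e, u) then μ ω else 0) else 0)
      = ∑ ω, (if φ e = w ∧ (F ω, U ω) = (e, u) then μ ω else 0) := by
    intro e
    split_ifs with h
    · refine Finset.sum_congr rfl fun ω _ => by simp [h]
    · symm; refine Finset.sum_eq_zero fun ω _ => by simp [h]
  rw [Finset.sum_congr rfl fun e _ => h1 e, Finset.sum_comm]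
  refine Finset.sum_congr rfl fun ω _ => ?_
  rw [Finset.sum_eq_single (F ω)]
  · simp [Prod.ext_iff, and_assoc, eq_comm]
  · intro e _ he
    rw [if_neg]
    rintro ⟨-, h2⟩
    exact he (congrArg Prod.fst h2).symm
  · intro h; exact absurd (Finset.mem_univ _) h

lemma pdist_comp' {E E' : Type*} [Fintype E] [DecidableEq E] [DecidableEq E']
    (F : Ω → E) (φ : E → E') (w : E') :
    pdist μ (fun ω => φ (F ω)) w = ∑ e, if φ e = w then pdist μ F e else 0 := by
  unfold pdist
  have h1 : ∀ e : E, (if φ e = w then ∑ ω, (if F ω = e then μ ω else 0) else 0)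
      = ∑ ω, (if φ e = w ∧ F ω = e then μ ω else 0) := by
    intro e
    split_ifs with h
    · refine Finset.sum_congr rfl fun ω _ => by simp [h]
    · symm; refine Finset.sum_eq_zero fun ω _ => by simp [h]
  rw [Finset.sum_congr rfl fun e _ => h1 e, Finset.sum_comm]
  refine Finset.sum_congr rfl fun ω _ => ?_
  rw [Finset.sum_eq_single (F ω)]
  · simp
  · intro e _ he
    rw [if_neg]
    rintro ⟨-, h2⟩
    exact he h2.symm
  · intro h; exact absurd (Finset.mem_univ _) h

lemma ci_marg {E₀ E' Dd Cc : Type*} [Fintype E₀] [DecidableEq E₀] [DecidableEq E']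
    [DecidableEq Dd] [DecidableEq Cc]
    (F : Ω → E₀) (U : Ω → Dd) (Z : Ω → Cc) (ζ₀ : E₀ → Cc)
    (hM : ∀ e u, pdist μ (fun ω => (F ω, U ω)) (e, u) * pdist μ Z (ζ₀ e)
       = pdist μ F e * pdist μ (fun ω => (Z ω, U ω)) (ζ₀ e, u))
    (φ : E₀ → E') (ζ : E' → Cc) (hζ : ∀ e, ζ (φ e) = ζ₀ e)
    (W : Ω → E') (hW : ∀ ω, W ω = φ (F ω)) :
    ∀ w u, pdist μ (fun ω => (W ω, U ω)) (w, u) * pdist μ Z (ζ w)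
       = pdist μ W w * pdist μ (fun ω => (Z ω, U ω)) (ζ w, u) := by
  intro w u
  have e1 : pdist μ (fun ω => (W ω, U ω)) (w, u)
      = pdist μ (fun ω => (φ (F ω), U ω)) (w, u) :=
    pdist_congr fun ω => by rw [hW ω]
  have e2 : pdist μ W w = pdist μ (fun ω => φ (F ω)) w :=
    pdist_congr fun ω => by rw [hW ω]
  rw [e1, e2, pdist_comp_s10 F U φ w u, pdist_comp' F φ w, Finset.sum_mul, Finset.sum_mul]
  refine Finset.sum_congr rfl fun e _ => ?_
  by_cases h : φ e = w
  · rw [if_pos h, if_pos h, ← h, hζ, hM]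
  · rw [if_neg h, if_neg h, zero_mul, zero_mul]

lemma ci_step {Dd Cc E : Type*} [Fintype Dd] [Fintype Cc] [Fintype E]
    [DecidableEq Dd] [DecidableEq Cc] [DecidableEq E]
    (hμ : ∀ ω, 0 ≤ μ ω)
    (U : Ω → Dd) (Z : Ω → Cc) (W : Ω → E) (ζ : E → Cc) (hZ : ∀ ω, Z ω = ζ (W ω))
    (hCI : ∀ w u, pdist μ (fun ω => (W ω, U ω)) (w, u) * pdist μ Z (ζ w)
         = pdist μ W w * pdist μ (fun ω => (Z ω, U ω)) (ζ w, u)) :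
    entRV μ (fun ω => (U ω, W ω)) + entRV μ Z
      = entRV μ (fun ω => (U ω, Z ω)) + entRV μ W := by
  rw [entRV_eq, entRV_eq, entRV_eq, entRV_eq, ← neg_add, ← neg_add, neg_inj,
    ← Finset.sum_add_distrib, ← Finset.sum_add_distrib]
  refine Finset.sum_congr rfl fun ω _ => ?_
  rcases eq_or_lt_of_le (hμ ω) with h0 | h0
  · rw [← h0]; ring
  rw [← mul_add, ← mul_add]
  congr 1
  set p1 := pdist μ (fun ω' => (U ω', W ω')) ((fun ω' => (U ω', W ω')) ω) with hp1
  set p2 := pdist μ Z (Z ω) with hp2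
  set p3 := pdist μ (fun ω' => (U ω', Z ω')) ((fun ω' => (U ω', Z ω')) ω) with hp3
  set p4 := pdist μ W (W ω) with hp4
  have hq1 : μ ω ≤ p1 := pdist_apply_le hμ _ ω
  have hq2 : μ ω ≤ p2 := pdist_apply_le hμ _ ω
  have hq3 : μ ω ≤ p3 := pdist_apply_le hμ _ ω
  have hq4 : μ ω ≤ p4 := pdist_apply_le hμ _ ω
  have key : p1 * p2 = p4 * p3 := by
    have h := hCI (W ω) (U ω)
    have e1 : pdist μ (fun ω' => (W ω', U ω')) (W ω, U ω) = p1 :=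
      pdist_congr fun ω' => by simp [Prod.ext_iff, and_comm]
    have e2 : pdist μ Z (ζ (W ω)) = p2 := by rw [hp2, hZ ω]
    have e3 : pdist μ (fun ω' => (Z ω', U ω')) (ζ (W ω), U ω) = p3 := by
      rw [← hZ ω]
      exact pdist_congr fun ω' => by simp [Prod.ext_iff, and_comm]
    rw [e1, e2, e3] at h
    exact h
  have l1 : Real.log p1 + Real.log p2 = Real.log (p1 * p2) :=
    (Real.log_mul (by linarith) (by linarith)).symm
  have l2 : Real.log p3 + Real.log p4 = Real.log (p4 * p3) := by
    rw [Real.log_mul (by linarith) (by linarith)]; ring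
  rw [l1, l2, key]

end Tools

/-- Padded history of `Ŷ` values with respect to the permutation `π`. -/
def padHat {Ω D : Type*} {N : ℕ} (π : Equiv.Perm (Fin N)) (Yhat : Fin N → Ω → D)
    (k : ℕ) (ω : Ω) : Fin N → Option D :=
  fun i => if (π.symm i : ℕ) < k then some (Yhat i ω) else none

/-- Successive Wyner–Ziv telescoping: under the Markov structure where each `Ŷᵢ`
depends only on `Yᵢ`, for any permutation `π` of `{1,…,N}`,
`Σₙ I(Y_{π(n)}; Ŷ_{π(n)} | Y₀, Ŷ_{π(1:n-1)}) = I(Y_{1:N}; Ŷ_{1:N} | Y₀)`. -/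
theorem successive_wynerziv_telescopes {Ω A B C D : Type*} {N : ℕ}
    [Fintype Ω] [Fintype A] [Fintype B] [Fintype C] [Fintype D]
    [DecidableEq A] [DecidableEq B] [DecidableEq C] [DecidableEq D]
    (μ : Ω → ℝ) (hμ : ∀ ω, 0 ≤ μ ω) (hμsum : ∑ ω, μ ω = 1)
    (X : Ω → A) (Y₀ : Ω → B) (Y : Fin N → Ω → C) (Yhat : Fin N → Ω → D)
    (hMarkov : ∀ (n : Fin N) (x : A) (y0 : B) (yv : Fin N → C) (cv : Fin N → D),
      pdist μ (fun ω => (X ω, Y₀ ω, fun i => Y i ω, fun i => Yhat i ω))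
          (x, y0, yv, cv) * pdist μ (Y n) (yv n) =
      pdist μ (fun ω => (X ω, Y₀ ω, fun i => Y i ω,
          fun i : {i : Fin N // i ≠ n} => Yhat i ω)) (x, y0, yv, fun i => cv i) *
        pdist μ (fun ω => (Y n ω, Yhat n ω)) (yv n, cv n))
    (π : Equiv.Perm (Fin N)) :
    ∑ n : Fin N,
      cmi μ (Y (π n)) (Yhat (π n))
        (fun ω => (Y₀ ω, fun m : {m : Fin N // m < n} => Yhat (π m) ω)) =
    cmi μ (fun ω => fun i => Y i ω) (fun ω => fun i => Yhat i ω) Y₀ := by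
  classical
  have hΩ : Nonempty Ω := by
    by_contra h
    rw [not_nonempty_iff] at h
    rw [Finset.univ_eq_empty, Finset.sum_empty] at hμsum
    exact one_ne_zero hμsum.symm
  obtain ⟨ω₀⟩ := hΩ
  have hd : ∀ (k : ℕ) (ω : Ω) (i : Fin N),
      padHat π Yhat k ω i = if (π.symm i : ℕ) < k then some (Yhat i ω) else none :=
    fun _ _ _ => rfl
  -- the two telescoping entropy sequences
  set Fe : ℕ → ℝ := fun k => entRV μ (fun ω => (Y₀ ω, padHat π Yhat k ω)) with hFe
  set Ge : ℕ → ℝ := fun k =>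
    entRV μ (fun ω => ((fun i => Y i ω), Y₀ ω, padHat π Yhat k ω)) with hGe
  have key : ∀ n : Fin N,
      cmi μ (Y (π n)) (Yhat (π n))
        (fun ω => (Y₀ ω, fun m : {m : Fin N // m < n} => Yhat (π m) ω))
      = (Fe ((n : ℕ) + 1) - Fe (n : ℕ)) + (Ge (n : ℕ) - Ge ((n : ℕ) + 1)) := by
    intro n
    have hmlt : ∀ m : {m : Fin N // m < n}, ((π.symm (π (m : Fin N))) : ℕ) < (n : ℕ) := by
      intro m; rw [Equiv.symm_apply_apply]; exact m.2
    -- the Markov hypothesis, in pair form with the n-th reconstruction split off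
    have hM' : ∀ (e : A × B × (Fin N → C) × ({i : Fin N // i ≠ π n} → D)) (u : D),
        pdist μ (fun ω => ((X ω, Y₀ ω, (fun i => Y i ω),
            (fun i : {i : Fin N // i ≠ π n} => Yhat i ω)), Yhat (π n) ω)) (e, u)
          * pdist μ (Y (π n)) (e.2.2.1 (π n))
        = pdist μ (fun ω => (X ω, Y₀ ω, (fun i => Y i ω),
            (fun i : {i : Fin N // i ≠ π n} => Yhat i ω))) e
          * pdist μ (fun ω => (Y (π n) ω, Yhat (π n) ω)) (e.2.2.1 (π n), u) := by
      rintro ⟨x, y0, yv, s⟩ u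
      set cv : Fin N → D := fun j => if h : j = π n then u else s ⟨j, h⟩ with hcv
      have h := hMarkov (π n) x y0 yv cv
      have h1 : (fun i : {i : Fin N // i ≠ π n} => cv i) = s := funext fun i => by
        show (if h : (i : Fin N) = π n then u else s ⟨i, h⟩) = s i
        exact dif_neg i.2
      have h2 : cv (π n) = u := dif_pos rfl
      rw [h1, h2] at h
      have h3 : pdist μ (fun ω => (X ω, Y₀ ω, fun i => Y i ω, fun i => Yhat i ω))
            (x, y0, yv, cv)
          = pdist μ (fun ω => ((X ω, Y₀ ω, (fun i => Y i ω),
              (fun i : {i : Fin N // i ≠ π n} => Yhat i ω)), Yhat (π n) ω))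
            ((x, y0, yv, s), u) := by
        refine pdist_congr fun ω => ?_
        simp only [Prod.mk.injEq, funext_iff]
        constructor
        · rintro ⟨g1, g2, g3, g4⟩
          exact ⟨⟨g1, g2, g3, fun i => by
              rw [g4 ↑i]
              show (if h : (i : Fin N) = π n then u else s ⟨i, h⟩) = s i
              exact dif_neg i.2⟩,
            by rw [g4 (π n)]; exact dif_pos rfl⟩
        · rintro ⟨⟨g1, g2, g3, g4⟩, g5⟩
          refine ⟨g1, g2, g3, fun i => ?_⟩
          show Yhat i ω = if h : i = π n then u else s ⟨i, h⟩
          by_cases hi : i = π n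
          · rw [dif_pos hi, ← g5, hi]
          · rw [dif_neg hi]; exact g4 ⟨i, hi⟩
      rw [h3] at h
      exact h
    -- conditional independence for the two conditioning tuples
    have hCI1 := ci_marg (μ := μ)
      (F := fun ω => (X ω, Y₀ ω, (fun i => Y i ω),
        (fun i : {i : Fin N // i ≠ π n} => Yhat i ω)))
      (U := Yhat (π n)) (Z := Y (π n)) (ζ₀ := fun e => e.2.2.1 (π n)) hM'
      (φ := fun e => (e.2.2.1, e.2.1,
        fun i => if h : (π.symm i : ℕ) < (n : ℕ) then
          some (e.2.2.2 ⟨i, fun hi => absurd h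
            (by rw [hi, Equiv.symm_apply_apply]; exact lt_irrefl _)⟩) else none))
      (ζ := fun w => w.1 (π n)) (fun e => rfl)
      (W := fun ω => ((fun i => Y i ω), Y₀ ω, padHat π Yhat (n : ℕ) ω))
      (fun ω => Prod.ext rfl (Prod.ext rfl (funext fun i => by
        dsimp only; rw [hd]; split_ifs <;> rfl)))
    have hCI2 := ci_marg (μ := μ)
      (F := fun ω => (X ω, Y₀ ω, (fun i => Y i ω),
        (fun i : {i : Fin N // i ≠ π n} => Yhat i ω)))
      (U := Yhat (π n)) (Z := Y (π n)) (ζ₀ := fun e => e.2.2.1 (π n)) hM'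
      (φ := fun e => (e.2.2.1 (π n), e.2.1,
        fun i => if h : (π.symm i : ℕ) < (n : ℕ) then
          some (e.2.2.2 ⟨i, fun hi => absurd h
            (by rw [hi, Equiv.symm_apply_apply]; exact lt_irrefl _)⟩) else none))
      (ζ := fun w => w.1) (fun e => rfl)
      (W := fun ω => (Y (π n) ω, Y₀ ω, padHat π Yhat (n : ℕ) ω))
      (fun ω => Prod.ext rfl (Prod.ext rfl (funext fun i => by
        dsimp only; rw [hd]; split_ifs <;> rfl)))
    have claim1 : entRV μ (fun ω => (Yhat (π n) ω, (fun i => Y i ω), Y₀ ω,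
          padHat π Yhat (n : ℕ) ω)) + entRV μ (Y (π n))
        = entRV μ (fun ω => (Yhat (π n) ω, Y (π n) ω))
          + entRV μ (fun ω => ((fun i => Y i ω), Y₀ ω, padHat π Yhat (n : ℕ) ω)) :=
      ci_step hμ _ _ _ _ (fun ω => rfl) hCI1
    have claim2 : entRV μ (fun ω => (Yhat (π n) ω, Y (π n) ω, Y₀ ω,
          padHat π Yhat (n : ℕ) ω)) + entRV μ (Y (π n))
        = entRV μ (fun ω => (Yhat (π n) ω, Y (π n) ω))
          + entRV μ (fun ω => (Y (π n) ω, Y₀ ω, padHat π Yhat (n : ℕ) ω)) :=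
      ci_step hμ _ _ _ _ (fun ω => rfl) hCI2
    -- identifications of the conditioning tuples with padded histories
    have he1 : entRV μ (fun ω => (Y₀ ω, fun m : {m : Fin N // m < n} => Yhat (π ↑m) ω))
        = Fe (n : ℕ) := by
      have h := entRV_congr (μ := μ)
        (X := fun ω => (Y₀ ω, fun m : {m : Fin N // m < n} => Yhat (π ↑m) ω))
        (X' := fun ω => (Y₀ ω, padHat π Yhat (n : ℕ) ω))
        (fun p => (p.1, fun i => if h : (π.symm i : ℕ) < (n : ℕ) then
          some (p.2 ⟨π.symm i, h⟩) else none))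
        (fun q => (q.1, fun m => (q.2 (π ↑m)).getD (Yhat (π ↑m) ω₀)))
        (fun ω => Prod.ext rfl (funext fun i => by
          dsimp only; rw [hd]; split_ifs with h
          · simp
          · rfl))
        (fun ω => Prod.ext rfl (funext fun m => by
          dsimp only; rw [hd, if_pos (hmlt m)]; rfl))
      simp only [hFe]
      exact h
    have he2 : entRV μ (fun ω => (Yhat (π n) ω, Y₀ ω,
          fun m : {m : Fin N // m < n} => Yhat (π ↑m) ω))
        = Fe ((n : ℕ) + 1) := by
      have h := entRV_congr (μ := μ)
        (X := fun ω => (Yhat (π n) ω, Y₀ ω, fun m : {m : Fin N // m < n} => Yhat (π ↑m) ω))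
        (X' := fun ω => (Y₀ ω, padHat π Yhat ((n : ℕ) + 1) ω))
        (fun p => (p.2.1, fun i => if (π.symm i : ℕ) = (n : ℕ) then some p.1 else
          if h : (π.symm i : ℕ) < (n : ℕ) then some (p.2.2 ⟨π.symm i, h⟩) else none))
        (fun q => ((q.2 (π n)).getD (Yhat (π n) ω₀), q.1,
          fun m => (q.2 (π ↑m)).getD (Yhat (π ↑m) ω₀)))
        (fun ω => Prod.ext rfl (funext fun i => by
          dsimp only; rw [hd]
          by_cases h1 : (π.symm i : ℕ) = (n : ℕ)
          · rw [if_pos (show (π.symm i : ℕ) < (n : ℕ) + 1 by omega), if_pos h1]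
            have h2 : i = π n := by
              have h3 : π.symm i = n := Fin.val_inj.mp h1
              rw [← h3, Equiv.apply_symm_apply]
            rw [h2]
          · rw [if_neg h1]
            by_cases h2 : (π.symm i : ℕ) < (n : ℕ)
            · rw [dif_pos h2, if_pos (by omega)]; simp
            · rw [dif_neg h2, if_neg (by omega)]))
        (fun ω => by
          refine Prod.ext ?_ (Prod.ext rfl (funext fun m => ?_))
          · dsimp only
            rw [hd, if_pos (show ((π.symm (π n)) : ℕ) < (n : ℕ) + 1 by
              rw [Equiv.symm_apply_apply]; omega)]
            rfl
          · dsimp only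
            rw [hd, if_pos (show ((π.symm (π ↑m)) : ℕ) < (n : ℕ) + 1 by
              have := hmlt m; omega)]
            rfl)
      simp only [hFe]
      exact h
    have he3 : entRV μ (fun ω => (Y (π n) ω, Y₀ ω,
          fun m : {m : Fin N // m < n} => Yhat (π ↑m) ω))
        = entRV μ (fun ω => (Y (π n) ω, Y₀ ω, padHat π Yhat (n : ℕ) ω)) :=
      entRV_congr (μ := μ)
        (X := fun ω => (Y (π n) ω, Y₀ ω, fun m : {m : Fin N // m < n} => Yhat (π ↑m) ω))
        (X' := fun ω => (Y (π n) ω, Y₀ ω, padHat π Yhat (n : ℕ) ω))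
        (fun p => (p.1, p.2.1, fun i => if h : (π.symm i : ℕ) < (n : ℕ) then
          some (p.2.2 ⟨π.symm i, h⟩) else none))
        (fun q => (q.1, q.2.1, fun m => (q.2.2 (π ↑m)).getD (Yhat (π ↑m) ω₀)))
        (fun ω => Prod.ext rfl (Prod.ext rfl (funext fun i => by
          dsimp only; rw [hd]; split_ifs with h
          · simp
          · rfl)))
        (fun ω => Prod.ext rfl (Prod.ext rfl (funext fun m => by
          dsimp only; rw [hd, if_pos (hmlt m)]; rfl)))
    have he4 : entRV μ (fun ω => (Y (π n) ω, Yhat (π n) ω, Y₀ ω,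
          fun m : {m : Fin N // m < n} => Yhat (π ↑m) ω))
        = entRV μ (fun ω => (Yhat (π n) ω, Y (π n) ω, Y₀ ω, padHat π Yhat (n : ℕ) ω)) :=
      entRV_congr (μ := μ)
        (X := fun ω => (Y (π n) ω, Yhat (π n) ω, Y₀ ω,
          fun m : {m : Fin N // m < n} => Yhat (π ↑m) ω))
        (X' := fun ω => (Yhat (π n) ω, Y (π n) ω, Y₀ ω, padHat π Yhat (n : ℕ) ω))
        (fun p => (p.2.1, p.1, p.2.2.1, fun i => if h : (π.symm i : ℕ) < (n : ℕ) then
          some (p.2.2.2 ⟨π.symm i, h⟩) else none))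
        (fun q => (q.2.1, q.1, q.2.2.1, fun m => (q.2.2.2 (π ↑m)).getD (Yhat (π ↑m) ω₀)))
        (fun ω => Prod.ext rfl (Prod.ext rfl (Prod.ext rfl (funext fun i => by
          dsimp only; rw [hd]; split_ifs with h
          · simp
          · rfl))))
        (fun ω => Prod.ext rfl (Prod.ext rfl (Prod.ext rfl (funext fun m => by
          dsimp only; rw [hd, if_pos (hmlt m)]; rfl))))
    have he6 : entRV μ (fun ω => (Yhat (π n) ω, (fun i => Y i ω), Y₀ ω,
          padHat π Yhat (n : ℕ) ω)) = Ge ((n : ℕ) + 1) := by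
      have h := entRV_congr (μ := μ)
        (X := fun ω => (Yhat (π n) ω, (fun i => Y i ω), Y₀ ω, padHat π Yhat (n : ℕ) ω))
        (X' := fun ω => ((fun i => Y i ω), Y₀ ω, padHat π Yhat ((n : ℕ) + 1) ω))
        (fun p => (p.2.1, p.2.2.1,
          fun i => if (π.symm i : ℕ) = (n : ℕ) then some p.1 else p.2.2.2 i))
        (fun q => ((q.2.2 (π n)).getD (Yhat (π n) ω₀), q.1, q.2.1,
          fun i => if (π.symm i : ℕ) = (n : ℕ) then none else q.2.2 i))
        (fun ω => Prod.ext rfl (Prod.ext rfl (funext fun i => by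
          dsimp only; rw [hd, hd]
          by_cases h1 : (π.symm i : ℕ) = (n : ℕ)
          · rw [if_pos (show (π.symm i : ℕ) < (n : ℕ) + 1 by omega), if_pos h1]
            have h2 : i = π n := by
              have h3 : π.symm i = n := Fin.val_inj.mp h1
              rw [← h3, Equiv.apply_symm_apply]
            rw [h2]
          · rw [if_neg h1]
            by_cases h2 : (π.symm i : ℕ) < (n : ℕ)
            · rw [if_pos (by omega), if_pos h2]
            · rw [if_neg (by omega), if_neg h2])))
        (fun ω => by
          refine Prod.ext ?_ (Prod.ext rfl (Prod.ext rfl (funext fun i => ?_)))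
          · dsimp only
            rw [hd, if_pos (show ((π.symm (π n)) : ℕ) < (n : ℕ) + 1 by
              rw [Equiv.symm_apply_apply]; omega)]
            rfl
          · dsimp only
            rw [hd, hd]
            by_cases h1 : (π.symm i : ℕ) = (n : ℕ)
            · rw [if_pos h1, if_neg (show ¬ (π.symm i : ℕ) < (n : ℕ) by omega)]
            · rw [if_neg h1]
              by_cases h2 : (π.symm i : ℕ) < (n : ℕ)
              · rw [if_pos h2, if_pos (by omega)]
              · rw [if_neg h2, if_neg (by omega)])
      simp only [hGe]
      exact h
    have hGe1 : entRV μ (fun ω => ((fun i => Y i ω), Y₀ ω, padHat π Yhat (n : ℕ) ω))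
        = Ge (n : ℕ) := by simp only [hGe]
    simp only [cmi]
    linarith [he1, he2, he3, he4, he6, claim1, claim2, hGe1]
  rw [Finset.sum_congr rfl fun n _ => key n]
  rw [Fin.sum_univ_eq_sum_range
    (fun k => (Fe (k + 1) - Fe k) + (Ge k - Ge (k + 1))) N]
  rw [Finset.sum_add_distrib, Finset.sum_range_sub Fe, Finset.sum_range_sub' Ge]
  have hF0 : Fe 0 = entRV μ Y₀ := by
    have h := entRV_congr (μ := μ) (X := fun ω => (Y₀ ω, padHat π Yhat 0 ω)) (X' := Y₀)
      (fun p => p.1) (fun b => (b, fun _ => none))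
      (fun ω => rfl)
      (fun ω => Prod.ext rfl (funext fun i => by simp [padHat]))
    simp only [hFe]
    exact h
  have hFN : Fe N = entRV μ (fun ω => ((fun i => Yhat i ω), Y₀ ω)) := by
    have h := entRV_congr (μ := μ) (X := fun ω => (Y₀ ω, padHat π Yhat N ω))
      (X' := fun ω => ((fun i => Yhat i ω), Y₀ ω))
      (fun p => ((fun i => (p.2 i).getD (Yhat i ω₀)), p.1))
      (fun q => (q.2, fun i => some (q.1 i)))
      (fun ω => Prod.ext (funext fun i => by
        show (Yhat i ω) = (padHat π Yhat N ω i).getD (Yhat i ω₀)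
        rw [hd, if_pos (π.symm i).isLt]; rfl) rfl)
      (fun ω => Prod.ext rfl (funext fun i => by
        show padHat π Yhat N ω i = some (Yhat i ω)
        rw [hd, if_pos (π.symm i).isLt]))
    simp only [hFe]
    exact h
  have hG0 : Ge 0 = entRV μ (fun ω => ((fun i => Y i ω), Y₀ ω)) := by
    have h := entRV_congr (μ := μ)
      (X := fun ω => ((fun i => Y i ω), Y₀ ω, padHat π Yhat 0 ω))
      (X' := fun ω => ((fun i => Y i ω), Y₀ ω))
      (fun p => (p.1, p.2.1)) (fun q => (q.1, q.2, fun _ => none))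
      (fun ω => rfl)
      (fun ω => Prod.ext rfl (Prod.ext rfl (funext fun i => by simp [padHat])))
    simp only [hGe]
    exact h
  have hGN : Ge N = entRV μ (fun ω => ((fun i => Y i ω), (fun i => Yhat i ω), Y₀ ω)) := by
    have h := entRV_congr (μ := μ)
      (X := fun ω => ((fun i => Y i ω), Y₀ ω, padHat π Yhat N ω))
      (X' := fun ω => ((fun i => Y i ω), (fun i => Yhat i ω), Y₀ ω))
      (fun p => (p.1, (fun i => (p.2.2 i).getD (Yhat i ω₀)), p.2.1))
      (fun q => (q.1, q.2.2, fun i => some (q.2.1 i)))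
      (fun ω => Prod.ext rfl (Prod.ext (funext fun i => by
        show (Yhat i ω) = (padHat π Yhat N ω i).getD (Yhat i ω₀)
        rw [hd, if_pos (π.symm i).isLt]; rfl) rfl))
      (fun ω => Prod.ext rfl (Prod.ext rfl
        (funext fun i => by
          show padHat π Yhat N ω i = some (Yhat i ω)
          rw [hd, if_pos (π.symm i).isLt])))
    simp only [hGe]
    exact h
  rw [hF0, hFN, hG0, hGN]
  simp only [cmi]
  ring
end

section
/- Let Q be an n×n positive semidefinite Hermitian matrix, H₀ an m₀×n matrix, H₁ an m₁×n matrix, σ² > 0, and A a m₁×m₁ positive semidefinite Hermitian matrix. Define R := H₁·(I + (1/σ²)·Q·H₀†·H₀)^{-1}·Q·H₁† + σ²·I. Then log det(I + (1/σ²)·Q·H₀†·H₀ + Q·H₁†·(A·σ² + I)^{-1}·A·H₁) = log det(I + (1/σ²)·Q·H₀†·H₀) + log det(I + A·R) - log det(I + σ²·A). -/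
open Matrix ComplexOrder

private lemma smul_psd {n : ℕ} {M : Matrix (Fin n) (Fin n) ℂ} (hM : M.PosSemidef) {r : ℝ}
    (hr : 0 ≤ r) : ((r : ℂ) • M).PosSemidef := by
  exact hM.smul (by exact_mod_cast hr)

private lemma det_parts {n : ℕ} {M : Matrix (Fin n) (Fin n) ℂ} (hM : M.PosDef) :
    0 < M.det.re ∧ M.det.im = 0 := by
  have := hM.det_pos
  rw [Complex.lt_def] at this
  simpa using ⟨this.1, this.2.symm⟩

private lemma det_parts_one_add {n : ℕ} {M : Matrix (Fin n) (Fin n) ℂ} (hM : M.PosSemidef) :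
    0 < (1 + M).det.re ∧ (1 + M).det.im = 0 :=
  det_parts (Matrix.PosDef.one.add_posSemidef hM)

/-- Log-determinant expansion for the two-base-station Lagrangian:
`log det(I + σ⁻²QH₀ᴴH₀ + QH₁ᴴ(Aσ²+I)⁻¹AH₁)
  = log det(I + σ⁻²QH₀ᴴH₀) + log det(I + A·R) - log det(I + σ²A)`,
where `R = H₁(I + σ⁻²QH₀ᴴH₀)⁻¹QH₁ᴴ + σ²I`. -/
theorem logdet_expansion_two_bs {k m₀ m₁ : ℕ}
    (Q : Matrix (Fin k) (Fin k) ℂ) (hQ : Q.PosSemidef)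
    (H₀ : Matrix (Fin m₀) (Fin k) ℂ) (H₁ : Matrix (Fin m₁) (Fin k) ℂ)
    (σ2 : ℝ) (hσ : 0 < σ2)
    (A : Matrix (Fin m₁) (Fin m₁) ℂ) (hA : A.PosSemidef)
    (R : Matrix (Fin m₁) (Fin m₁) ℂ)
    (hR : R = H₁ * (1 + ((σ2 : ℂ))⁻¹ • (Q * H₀ᴴ * H₀))⁻¹ * Q * H₁ᴴ + (σ2 : ℂ) • 1) :
    Real.log ((1 + ((σ2 : ℂ))⁻¹ • (Q * H₀ᴴ * H₀)
        + Q * H₁ᴴ * ((σ2 : ℂ) • A + 1)⁻¹ * A * H₁).det.re) =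
      Real.log ((1 + ((σ2 : ℂ))⁻¹ • (Q * H₀ᴴ * H₀)).det.re)
        + Real.log ((1 + A * R).det.re)
        - Real.log ((1 + (σ2 : ℂ) • A).det.re) := by
  obtain ⟨C, hC⟩ : ∃ B, Q = Bᴴ * B := by
    open scoped MatrixOrder in
    obtain ⟨X, hX, -, hXe⟩ :=
      CFC.exists_sqrt_of_isSelfAdjoint_of_quasispectrumRestricts (sub_zero Q ▸ hQ.isHermitian)
        (QuasispectrumRestricts.nnreal_of_nonneg hQ.nonneg)
    exact ⟨X, by rw [← hXe]; nth_rewrite 1 [← hX.star_eq]; rfl⟩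
  obtain ⟨D, hD⟩ : ∃ B, A = Bᴴ * B := by
    open scoped MatrixOrder in
    obtain ⟨X, hX, -, hXe⟩ :=
      CFC.exists_sqrt_of_isSelfAdjoint_of_quasispectrumRestricts (sub_zero A ▸ hA.isHermitian)
        (QuasispectrumRestricts.nnreal_of_nonneg hA.nonneg)
    exact ⟨X, by rw [← hXe]; nth_rewrite 1 [← hX.star_eq]; rfl⟩
  have hσi : (0:ℝ) ≤ σ2⁻¹ := (inv_pos.mpr hσ).le
  set S : Matrix (Fin k) (Fin k) ℂ := 1 + ((σ2 : ℂ))⁻¹ • (Q * H₀ᴴ * H₀) with hS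
  set T : Matrix (Fin m₁) (Fin m₁) ℂ := (σ2 : ℂ) • A + 1 with hT
  have hT1 : (1 : Matrix (Fin m₁) (Fin m₁) ℂ) + (σ2 : ℂ) • A = T := by rw [hT, add_comm]
  have hci : ((σ2 : ℂ))⁻¹ = ((σ2⁻¹ : ℝ) : ℂ) := by push_cast; ring
  rw [hT1]
  -- det S positivity
  have hSdet : S.det = (1 + ((σ2:ℂ))⁻¹ • (C * H₀ᴴ * H₀ * Cᴴ)).det := by
    have h1 : ((σ2:ℂ))⁻¹ • (Q * H₀ᴴ * H₀) = Cᴴ * (((σ2:ℂ))⁻¹ • (C * H₀ᴴ * H₀)) := by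
      rw [Matrix.mul_smul, hC]
      simp [Matrix.mul_assoc]
    rw [hS, h1, det_one_add_mul_comm, Matrix.smul_mul]
  have hCHpsd : (C * H₀ᴴ * H₀ * Cᴴ).PosSemidef := by
    have h2 : C * H₀ᴴ * H₀ * Cᴴ = (H₀ * Cᴴ)ᴴ * (H₀ * Cᴴ) := by
      rw [conjTranspose_mul, conjTranspose_conjTranspose]
      simp [Matrix.mul_assoc]
    exact h2 ▸ Matrix.posSemidef_conjTranspose_mul_self _
  have hSpos : 0 < S.det.re ∧ S.det.im = 0 := by
    rw [hSdet, hci]; exact det_parts_one_add (smul_psd hCHpsd hσi)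
  -- det T positivity
  have hTposdef : T.PosDef := Matrix.PosDef.posSemidef_add (smul_psd hA hσ.le) Matrix.PosDef.one
  have hTpos : 0 < T.det.re ∧ T.det.im = 0 := det_parts hTposdef
  -- invertibility
  have hSne : S.det ≠ 0 := fun h => by simp [h] at hSpos
  have hTne : T.det ≠ 0 := fun h => by simp [h] at hTpos
  have hSunit : IsUnit S.det := isUnit_iff_ne_zero.mpr hSne
  have hTunit : IsUnit T.det := isUnit_iff_ne_zero.mpr hTne
  have hSHne : Sᴴ.det ≠ 0 := by rw [det_conjTranspose]; exact star_ne_zero.mpr hSne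
  -- S⁻¹ * Q is PSD
  have hSQ : S * Q = Q + ((σ2:ℂ))⁻¹ • ((H₀ * Q)ᴴ * (H₀ * Q)) := by
    rw [hS]
    simp only [Matrix.add_mul, Matrix.one_mul, Matrix.smul_mul, conjTranspose_mul,
      hQ.1.eq, Matrix.mul_assoc]
  have hSQpsd : (S * Q).PosSemidef := by
    rw [hSQ, hci]
    exact hQ.add (smul_psd (Matrix.posSemidef_conjTranspose_mul_self _) hσi)
  have hcomm : S * Q = Q * Sᴴ := by
    rw [hS]
    simp only [conjTranspose_add, conjTranspose_one, conjTranspose_smul, conjTranspose_mul,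
      conjTranspose_conjTranspose, hQ.1.eq, Matrix.mul_add, Matrix.mul_one, Matrix.add_mul,
      Matrix.one_mul, Matrix.mul_smul, Matrix.smul_mul, Matrix.mul_assoc]
    congr 2
    simp [Complex.star_def, map_inv₀, Complex.conj_ofReal]
  have hSiQ : (S⁻¹ * Q).PosSemidef := by
    have heq : S⁻¹ * Q = S⁻¹ * (S * Q) * (S⁻¹)ᴴ := by
      rw [conjTranspose_nonsing_inv, hcomm]
      rw [Matrix.mul_assoc, Matrix.mul_assoc, Matrix.mul_nonsing_inv _
        (isUnit_iff_ne_zero.mpr hSHne), Matrix.mul_one]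
    rw [heq]
    exact hSQpsd.mul_mul_conjTranspose_same _
  have hRpsd : R.PosSemidef := by
    rw [hR]
    refine Matrix.PosSemidef.add ?_ (smul_psd Matrix.PosSemidef.one hσ.le)
    have h3 := hSiQ.mul_mul_conjTranspose_same H₁
    simpa [Matrix.mul_assoc] using h3
  -- det (1 + A R) positivity
  have hARdet : (1 + A * R).det = (1 + D * R * Dᴴ).det := by
    rw [hD, Matrix.mul_assoc, det_one_add_mul_comm, Matrix.mul_assoc]
  have hARpos : 0 < (1 + A * R).det.re ∧ (1 + A * R).det.im = 0 := by
    rw [hARdet]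
    exact det_parts_one_add (hRpsd.mul_mul_conjTranspose_same D)
  -- key determinant identity
  have hM1 : (S + Q * H₁ᴴ * T⁻¹ * A * H₁).det
      = S.det * (1 + T⁻¹ * (A * H₁) * S⁻¹ * (Q * H₁ᴴ)).det := by
    have e1 : S + Q * H₁ᴴ * T⁻¹ * A * H₁ = S + (Q * H₁ᴴ) * (T⁻¹ * (A * H₁)) := by
      simp [Matrix.mul_assoc]
    rw [e1, Matrix.det_add_mul _ _ hSunit]
  have hAR1 : (1 + A * R).det = T.det * (1 + S⁻¹ * (Q * H₁ᴴ) * T⁻¹ * (A * H₁)).det := by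
    have e2 : 1 + A * R = T + (A * H₁) * (S⁻¹ * (Q * H₁ᴴ)) := by
      rw [hR, hT, Matrix.mul_add]
      simp only [Matrix.mul_smul, Matrix.mul_one, Matrix.mul_assoc]
      abel
    rw [e2, Matrix.det_add_mul _ _ hTunit]
  have hcommdet : (1 + T⁻¹ * (A * H₁) * S⁻¹ * (Q * H₁ᴴ)).det
      = (1 + S⁻¹ * (Q * H₁ᴴ) * T⁻¹ * (A * H₁)).det := by
    have e3 : T⁻¹ * (A * H₁) * S⁻¹ * (Q * H₁ᴴ)
        = (T⁻¹ * (A * H₁)) * (S⁻¹ * (Q * H₁ᴴ)) := by rw [Matrix.mul_assoc]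
    have e4 : S⁻¹ * (Q * H₁ᴴ) * T⁻¹ * (A * H₁)
        = (S⁻¹ * (Q * H₁ᴴ)) * (T⁻¹ * (A * H₁)) := by rw [Matrix.mul_assoc]
    rw [e3, e4, det_one_add_mul_comm]
  have hkey : (S + Q * H₁ᴴ * T⁻¹ * A * H₁).det * T.det = S.det * (1 + A * R).det := by
    rw [hM1, hAR1, hcommdet]; ring
  -- numeric conclusion
  obtain ⟨hs, hsim⟩ := hSpos
  obtain ⟨ht, htim⟩ := hTpos
  obtain ⟨ha, haim⟩ := hARpos
  have hSc : S.det = ((S.det.re : ℝ) : ℂ) := Complex.ext rfl (by simp [hsim])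
  have hTc : T.det = ((T.det.re : ℝ) : ℂ) := Complex.ext rfl (by simp [htim])
  have hAc : (1 + A * R).det = (((1 + A * R).det.re : ℝ) : ℂ) :=
    Complex.ext rfl (by simp [haim])
  have hMc : (S + Q * H₁ᴴ * T⁻¹ * A * H₁).det
      = ((S.det.re * (1 + A * R).det.re / T.det.re : ℝ) : ℂ) := by
    rw [hSc, hTc, hAc] at hkey
    have htc : ((T.det.re : ℝ) : ℂ) ≠ 0 := by exact_mod_cast ht.ne'
    apply mul_right_cancel₀ htc
    rw [hkey]
    push_cast
    field_simp
  have hMre : (S + Q * H₁ᴴ * T⁻¹ * A * H₁).det.re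
      = S.det.re * (1 + A * R).det.re / T.det.re := by
    rw [hMc, Complex.ofReal_re]
  rw [hMre, Real.log_div (mul_ne_zero hs.ne' ha.ne') ht.ne', Real.log_mul hs.ne' ha.ne']
end
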